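/- arXiv:1402.6111 — 4 statements merged into one kernel-verified Lean document; each statement's English description precedes it below -/
import Mathlib

section
/- Let k be a field of characteristic 0, G a group, r and m natural numbers, and V a finite-dimensional representation of G over k. Let K ≤ S_{rm} be the subgroup of all permutations σ of {1, …, rm} for which there exists a permutation τ of {1, …, r} such that σ maps the block B_i = {(i−1)m+1, …, im} onto the block B_{τ(i)} for every i (so K is the wreath product S_m ≀ S_r permuting r blocks of size m). Then the dimension of the space of G-invariant vectors in Sym^r(Sym^m V), i.e. dim_k ((Sym^r(Sym^m V))^G), equals the dimension of the subspace of K-fixed vectors in (V^{⊗rm})^G, where S_{rm} acts on V^{⊗rm} by permuting tensor factors (an action commuting with the diagonal G-action). -/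
/-!
Formalization of statements from "Tensor invariants" (arXiv:1402.6111).
-/

open scoped TensorProduct

noncomputable section

namespace TensorInv

variable {k G V W : Type} [Field k] [Group G]
  [AddCommGroup V] [Module k V] [AddCommGroup W] [Module k W]

/-- The diagonal representation of `G` on the `r`-th tensor power of `V`:
`g • (v₁ ⊗ ⋯ ⊗ v_r) = g v₁ ⊗ ⋯ ⊗ g v_r`. -/
def tpowRep (ρ : Representation k G V) (r : ℕ) : Representation k G (⨂[k]^r V) where
  toFun g := PiTensorProduct.map (fun _ => ρ g)
  map_one' := by simp [PiTensorProduct.map_id]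
  map_mul' g h := by
    show PiTensorProduct.map _ = PiTensorProduct.map _ * PiTensorProduct.map _
    rw [Module.End.mul_eq_comp, ← PiTensorProduct.map_comp]
    congr 1; funext i; rw [map_mul]; rfl

/-- The representation of the symmetric group `S_r` on `⨂[k]^r V` permuting the tensor
factors: the `i`-th factor of `σ • (v₁ ⊗ ⋯ ⊗ v_r)` is `v_{σ⁻¹(i)}`. -/
def permRep (k V : Type) [Field k] [AddCommGroup V] [Module k V] (r : ℕ) :
    Representation k (Equiv.Perm (Fin r)) (⨂[k]^r V) where
  toFun σ := (PiTensorProduct.reindex k (fun _ : Fin r => V) σ).toLinearMap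
  map_one' := by
    show (PiTensorProduct.reindex k (fun _ : Fin r => V) (Equiv.refl (Fin r))).toLinearMap = _
    rw [PiTensorProduct.reindex_refl]; rfl
  map_mul' σ τ := by
    show (PiTensorProduct.reindex k (fun _ : Fin r => V) (τ.trans σ)).toLinearMap = _
    rw [← PiTensorProduct.reindex_trans]; rfl

/-- The `S_r`-action and the diagonal `G`-action on `⨂[k]^r V` commute. -/
lemma perm_tpow_comm (ρ : Representation k G V) (r : ℕ) (σ : Equiv.Perm (Fin r)) (g : G) :
    (permRep k V r σ) ∘ₗ (tpowRep ρ r g) = (tpowRep ρ r g) ∘ₗ (permRep k V r σ) := by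
  ext v
  simp [tpowRep, permRep, PiTensorProduct.reindex_tprod, Function.comp_def]

/-- `Hom_G(V, W)`: the space of `G`-equivariant linear maps, as a submodule of `V →ₗ[k] W`. -/
def equivariantHom (ρV : Representation k G V) (ρW : Representation k G W) :
    Submodule k (V →ₗ[k] W) where
  carrier := {f | ∀ g : G, f ∘ₗ ρV g = ρW g ∘ₗ f}
  zero_mem' g := by ext v; simp
  add_mem' := by
    intro f₁ f₂ h₁ h₂ g
    ext v
    have e₁ := LinearMap.congr_fun (h₁ g) v
    have e₂ := LinearMap.congr_fun (h₂ g) v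
    simp only [LinearMap.comp_apply, LinearMap.add_apply] at *
    rw [e₁, e₂, map_add]
  smul_mem' := by
    intro c f hf g
    ext v
    have e := LinearMap.congr_fun (hf g) v
    simp only [LinearMap.comp_apply, LinearMap.smul_apply] at *
    rw [e, map_smul]

/-- The submodule of linear maps `f : V →ₗ[k] W` satisfying the twisted intertwining
relations `f ∘ₗ a = c • (b ∘ₗ f)` for every triple `(a, c, b) ∈ S`. -/
def relHom (S : Set ((V →ₗ[k] V) × k × (W →ₗ[k] W))) : Submodule k (V →ₗ[k] W) where
  carrier := {f | ∀ p ∈ S, f ∘ₗ p.1 = p.2.1 • (p.2.2 ∘ₗ f)}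
  zero_mem' := by intro p _; ext v; simp
  add_mem' := by
    intro f g hf hg p hp
    ext v
    have h1 := LinearMap.congr_fun (hf p hp) v
    have h2 := LinearMap.congr_fun (hg p hp) v
    simp only [LinearMap.comp_apply, LinearMap.add_apply, LinearMap.smul_apply] at *
    rw [h1, h2, map_add, smul_add]
  smul_mem' := by
    intro c f hf p hp
    ext v
    have h1 := LinearMap.congr_fun (hf p hp) v
    simp only [LinearMap.comp_apply, LinearMap.smul_apply] at *
    rw [h1, map_smul, smul_comm]

/-- The submodule of vectors `x` satisfying `a x = c • x` for every pair `(a, c) ∈ S`. -/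
def relVec (S : Set ((V →ₗ[k] V) × k)) : Submodule k V where
  carrier := {x | ∀ p ∈ S, p.1 x = p.2 • x}
  zero_mem' := by intro p _; simp
  add_mem' := by intro x y hx hy p hp; rw [map_add, hx p hp, hy p hp, smul_add]
  smul_mem' := by intro c x hx p hp; rw [map_smul, hx p hp, smul_comm]

/-- The subspace of `⨂[k]^r V` spanned by the differences
`v₁ ⊗ ⋯ ⊗ v_r − v_{σ(1)} ⊗ ⋯ ⊗ v_{σ(r)}`. -/
def symRel (k V : Type) [Field k] [AddCommGroup V] [Module k V] (r : ℕ) :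
    Submodule k (⨂[k]^r V) :=
  Submodule.span k {x | ∃ (v : Fin r → V) (σ : Equiv.Perm (Fin r)),
    x = PiTensorProduct.tprod k v - PiTensorProduct.tprod k (fun i => v (σ i))}

/-- The `r`-th symmetric power `Sym^r V`, realized as the quotient of the `r`-th tensor
power by the span of the differences of pure tensors differing by a permutation of the
factors. -/
abbrev SymPow (k V : Type) [Field k] [AddCommGroup V] [Module k V] (r : ℕ) :=
  (⨂[k]^r V) ⧸ symRel k V r

lemma symRel_le_comap (ρ : Representation k G V) (r : ℕ) (g : G) :
    symRel k V r ≤ (symRel k V r).comap (tpowRep ρ r g) := by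
  refine Submodule.span_le.2 ?_
  rintro x ⟨v, σ, rfl⟩
  simp only [SetLike.mem_coe, Submodule.mem_comap, map_sub]
  have h1 : tpowRep ρ r g (PiTensorProduct.tprod k v)
      = PiTensorProduct.tprod k (fun i => ρ g (v i)) := by
    simp [tpowRep]
  have h2 : tpowRep ρ r g (PiTensorProduct.tprod k (fun i => v (σ i)))
      = PiTensorProduct.tprod k (fun i => ρ g (v (σ i))) := by
    simp [tpowRep]
  rw [h1, h2]
  exact Submodule.subset_span ⟨fun i => ρ g (v i), σ, rfl⟩

/-- The representation of `G` on `Sym^r V` induced by a representation on `V`. -/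
def symPowRep (ρ : Representation k G V) (r : ℕ) : Representation k G (SymPow k V r) where
  toFun g := Submodule.mapQ _ _ (tpowRep ρ r g) (symRel_le_comap ρ r g)
  map_one' := by
    refine Submodule.linearMap_qext _ ?_
    ext x
    simp [Submodule.mapQ_apply]
  map_mul' g h := by
    refine Submodule.linearMap_qext _ ?_
    ext x
    simp [Submodule.mapQ_apply]

/-- The predicate cutting out the wreath-product subgroup `K ≅ S_m ≀ S_r` of the symmetric
group on `{0, …, rm−1}`: there is a permutation `τ` of the `r` consecutive blocks of size
`m` such that `σ` maps the `i`-th block onto the `τ(i)`-th block, the block of an index `j`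
being `j / m`. -/
def BlockWreath (r m : ℕ) (σ : Equiv.Perm (Fin (r * m))) : Prop :=
  ∃ τ : Equiv.Perm (Fin r), ∀ (i : Fin r) (j : Fin (r * m)),
    (j : ℕ) / m = (i : ℕ) → ((σ j : ℕ)) / m = ((τ i : Fin r) : ℕ)

/-! ### Auxiliary material for Statement 8 -/

section Aux

open PiTensorProduct Function

variable (r m : ℕ)

/-- A multilinear map sends tuples with entries in spanning sets into any submodule
containing its values on tuples of generators. -/
theorem multilinear_span_mem {ι M N : Type} [Fintype ι] [DecidableEq ι]
    [AddCommMonoid M] [Module k M] [AddCommMonoid N] [Module k N]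
    (f : MultilinearMap k (fun _ : ι => M) N) (S : Set M)
    (hS : Submodule.span k S = ⊤) (p : Submodule k N)
    (h : ∀ v : ι → M, (∀ i, v i ∈ S) → f v ∈ p) (v : ι → M) : f v ∈ p := by
  suffices H : ∀ s : Finset ι, ∀ v : ι → M, (∀ i, i ∉ s → v i ∈ S) → f v ∈ p from
    H Finset.univ v (fun i hi => absurd (Finset.mem_univ i) hi)
  intro s
  induction s using Finset.induction with
  | empty => intro v hv; exact h v fun i => hv i (Finset.notMem_empty i)
  | @insert j s hj ih =>
    intro v hv
    have hvj : v j ∈ Submodule.span k S := hS ▸ Submodule.mem_top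
    have key : ∀ y ∈ Submodule.span k S, f (update v j y) ∈ p := by
      intro y hy
      induction hy using Submodule.span_induction with
      | mem y hy =>
        refine ih (update v j y) fun i hi => ?_
        rcases eq_or_ne i j with rfl | hij
        · simpa using hy
        · rw [update_of_ne hij]
          exact hv i (by simp [Finset.mem_insert, hij, hi])
      | zero => rw [f.map_update_zero]; exact p.zero_mem
      | add a b _ _ ha hb => rw [f.map_update_add]; exact p.add_mem ha hb
      | smul c a _ ha => rw [f.map_update_smul]; exact p.smul_mem c ha
    have := key (v j) hvj
    rwa [update_eq_self] at this

theorem ext_tprod_tprod {N : Type} [AddCommGroup N] [Module k N]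
    {L1 L2 : (⨂[k]^r (⨂[k]^m V)) →ₗ[k] N}
    (h : ∀ x : Fin r → Fin m → V,
      L1 (tprod k fun i => tprod k (x i)) = L2 (tprod k fun i => tprod k (x i))) :
    L1 = L2 := by
  apply PiTensorProduct.ext; apply MultilinearMap.ext; intro v
  have key := multilinear_span_mem ((L1 - L2).compMultilinearMap (tprod k))
    (Set.range (tprod k)) span_tprod_eq_top ⊥ ?_ v
  · simpa [sub_eq_zero] using key
  · intro w hw
    choose x hx using hw
    have hw' : w = fun i => tprod k (x i) := funext fun i => (hx i).symm
    subst hw'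
    simpa [sub_eq_zero] using h x

/-- `i*m + j` as an element of `Fin (r*m)`. -/
def idx (i : Fin r) (j : Fin m) : Fin (r * m) :=
  ⟨m * i + j, by
    calc m * (i : ℕ) + j < m * i + m := Nat.add_lt_add_left j.2 _
    _ = m * ((i : ℕ) + 1) := by rw [Nat.mul_add, Nat.mul_one]
    _ ≤ m * r := Nat.mul_le_mul_left m i.2
    _ = r * m := Nat.mul_comm m r⟩

theorem m_pos (p : Fin (r * m)) : 0 < m := by
  rcases Nat.eq_zero_or_pos m with h | h
  · exact absurd p.2 (by simp [h])
  · exact h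

/-- The block of an index. -/
def bi (p : Fin (r * m)) : Fin r :=
  ⟨(p : ℕ) / m, (Nat.div_lt_iff_lt_mul (m_pos r m p)).2 p.2⟩

/-- The position of an index within its block. -/
def bj (p : Fin (r * m)) : Fin m :=
  ⟨(p : ℕ) % m, Nat.mod_lt _ (m_pos r m p)⟩

variable {r m}

@[simp] theorem bi_idx (i : Fin r) (j : Fin m) : bi r m (idx r m i j) = i := by
  have hm : 0 < m := j.pos
  apply Fin.ext
  show (m * (i : ℕ) + j) / m = i
  rw [Nat.mul_add_div hm, Nat.div_eq_of_lt j.2, Nat.add_zero]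

@[simp] theorem bj_idx (i : Fin r) (j : Fin m) : bj r m (idx r m i j) = j := by
  apply Fin.ext
  show (m * (i : ℕ) + j) % m = j
  rw [Nat.mul_add_mod, Nat.mod_eq_of_lt j.2]

@[simp] theorem idx_bi_bj (p : Fin (r * m)) : idx r m (bi r m p) (bj r m p) = p := by
  apply Fin.ext
  exact Nat.div_add_mod (p : ℕ) m

theorem idx_inj {i i' : Fin r} {j j' : Fin m} (h : idx r m i j = idx r m i' j') :
    i = i' ∧ j = j' := by
  constructor
  · have := congrArg (bi r m) h; simpa using this
  · have := congrArg (bj r m) h; simpa using this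

theorem blockWreath_iff (σ : Equiv.Perm (Fin (r * m))) :
    TensorInv.BlockWreath r m σ ↔ ∃ τ : Equiv.Perm (Fin r),
      ∀ p : Fin (r * m), bi r m (σ p) = τ (bi r m p) := by
  constructor
  · rintro ⟨τ, hτ⟩
    exact ⟨τ, fun p => Fin.ext (hτ (bi r m p) p rfl)⟩
  · rintro ⟨τ, hτ⟩
    refine ⟨τ, fun i j hij => ?_⟩
    have hbij : bi r m j = i := Fin.ext hij
    have := hτ j
    rw [hbij] at this
    exact congrArg Fin.val this

variable (r m)

/-- The wreath-product subgroup `K ≅ S_m ≀ S_r` of `S_{rm}`. -/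
def KK : Subgroup (Equiv.Perm (Fin (r * m))) where
  carrier := {σ | TensorInv.BlockWreath r m σ}
  one_mem' := (blockWreath_iff 1).2 ⟨1, fun p => rfl⟩
  mul_mem' := by
    intro a b ha hb
    obtain ⟨τa, hτa⟩ := (blockWreath_iff a).1 ha
    obtain ⟨τb, hτb⟩ := (blockWreath_iff b).1 hb
    refine (blockWreath_iff (a * b)).2 ⟨τa * τb, fun p => ?_⟩
    have h1 := hτb p
    have h2 := hτa (b p)
    simp only [Equiv.Perm.mul_apply]
    rw [h2, h1]
  inv_mem' := by
    intro σ hσ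
    obtain ⟨τ, hτ⟩ := (blockWreath_iff σ).1 hσ
    refine (blockWreath_iff σ⁻¹).2 ⟨τ⁻¹, fun p => ?_⟩
    have := hτ (σ⁻¹ p)
    rw [show σ (σ⁻¹ p) = p from σ.apply_symm_apply p] at this
    rw [this, show τ⁻¹ (τ (bi r m (σ⁻¹ p))) = _ from τ.symm_apply_apply _]

theorem mem_KK_iff (σ : Equiv.Perm (Fin (r * m))) :
    σ ∈ KK r m ↔ TensorInv.BlockWreath r m σ := Iff.rfl

variable {r m}

/-- The permutation of `Fin (r*m)` acting by `π` inside block `i₀`. -/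
def innerPerm (i₀ : Fin r) (π : Equiv.Perm (Fin m)) : Equiv.Perm (Fin (r * m)) where
  toFun p := if bi r m p = i₀ then idx r m i₀ (π (bj r m p)) else p
  invFun p := if bi r m p = i₀ then idx r m i₀ (π⁻¹ (bj r m p)) else p
  left_inv p := by
    by_cases h : bi r m p = i₀
    · simp only [h, if_pos, bi_idx, bj_idx, if_true, Equiv.Perm.coe_inv, Equiv.symm_apply_apply]
      rw [← h, idx_bi_bj]
    · simp [h]
  right_inv p := by
    by_cases h : bi r m p = i₀
    · simp only [h, if_pos, bi_idx, bj_idx, if_true, Equiv.Perm.coe_inv, Equiv.apply_symm_apply]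
      rw [← h, idx_bi_bj]
    · simp [h]

theorem innerPerm_apply (i₀ : Fin r) (π : Equiv.Perm (Fin m)) (p : Fin (r * m)) :
    innerPerm i₀ π p = if bi r m p = i₀ then idx r m i₀ (π (bj r m p)) else p := rfl

theorem innerPerm_mem (i₀ : Fin r) (π : Equiv.Perm (Fin m)) : innerPerm i₀ π ∈ KK r m := by
  refine (blockWreath_iff _).2 ⟨1, fun p => ?_⟩
  rw [innerPerm_apply]
  by_cases h : bi r m p = i₀
  · rw [if_pos h, bi_idx, h]; rfl
  · rw [if_neg h]; rfl

/-- The permutation of `Fin (r*m)` permuting the blocks according to `τ`. -/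
def outerPerm (τ : Equiv.Perm (Fin r)) : Equiv.Perm (Fin (r * m)) where
  toFun p := idx r m (τ (bi r m p)) (bj r m p)
  invFun p := idx r m (τ⁻¹ (bi r m p)) (bj r m p)
  left_inv p := by
    simp only [bi_idx, bj_idx, Equiv.Perm.coe_inv, Equiv.symm_apply_apply, idx_bi_bj]
  right_inv p := by
    simp only [bi_idx, bj_idx, Equiv.Perm.coe_inv, Equiv.apply_symm_apply, idx_bi_bj]

theorem outerPerm_apply (τ : Equiv.Perm (Fin r)) (p : Fin (r * m)) :
    outerPerm τ p = idx r m (τ (bi r m p)) (bj r m p) := rfl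

theorem outerPerm_mem (τ : Equiv.Perm (Fin r)) : outerPerm τ ∈ KK r m := by
  refine (blockWreath_iff _).2 ⟨τ, fun p => ?_⟩
  rw [outerPerm_apply, bi_idx]

end Aux

section Aux2

open PiTensorProduct Function

theorem permRep_tprod {n : ℕ} (σ : Equiv.Perm (Fin n)) (v : Fin n → V) :
    TensorInv.permRep k V n σ (tprod k v) = tprod k (fun p => v (σ.symm p)) := by
  show (PiTensorProduct.reindex k (fun _ : Fin n => V) σ) (tprod k v) = _
  rw [PiTensorProduct.reindex_tprod]

noncomputable instance KKFintype (r m : ℕ) : Fintype (KK r m) := Fintype.ofFinite _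

instance KKNonempty (r m : ℕ) : Nonempty (KK r m) := ⟨1⟩

variable (r m : ℕ)

/-- Averaging operator over the wreath-product subgroup `K`. -/
noncomputable def eK : (⨂[k]^(r * m) V) →ₗ[k] ⨂[k]^(r * m) V :=
  ((Fintype.card (KK r m) : k))⁻¹ •
    ∑ σ : KK r m, TensorInv.permRep k V (r * m) (σ : Equiv.Perm (Fin (r * m)))

variable {r m}

theorem card_KK_ne_zero [CharZero k] : ((Fintype.card (KK r m) : k)) ≠ 0 :=
  Nat.cast_ne_zero.2 Fintype.card_ne_zero

theorem eK_apply (x : ⨂[k]^(r * m) V) :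
    eK r m (V := V) x = ((Fintype.card (KK r m) : k))⁻¹ •
      ∑ σ : KK r m, TensorInv.permRep k V (r * m) (σ : Equiv.Perm (Fin (r * m))) x := by
  simp [eK, LinearMap.sum_apply]

theorem eK_perm_apply (τ : Equiv.Perm (Fin (r * m))) (hτ : τ ∈ KK r m)
    (x : ⨂[k]^(r * m) V) : eK r m (TensorInv.permRep k V (r * m) τ x) = eK r m x := by
  rw [eK_apply, eK_apply]
  congr 1
  have key : ∀ σ : KK r m,
      TensorInv.permRep k V (r * m) (σ : Equiv.Perm (Fin (r * m)))
        (TensorInv.permRep k V (r * m) τ x)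
      = TensorInv.permRep k V (r * m) ((σ * ⟨τ, hτ⟩ : KK r m) : Equiv.Perm (Fin (r * m))) x := by
    intro σ
    rw [Subgroup.coe_mul, _root_.map_mul]
    rfl
  rw [Fintype.sum_congr _ _ key]
  exact Fintype.sum_equiv (Equiv.mulRight (⟨τ, hτ⟩ : KK r m)) _ _ (fun σ => rfl)

theorem perm_eK_apply (τ : Equiv.Perm (Fin (r * m))) (hτ : τ ∈ KK r m)
    (x : ⨂[k]^(r * m) V) :
    TensorInv.permRep k V (r * m) τ (eK r m x) = eK r m x := by
  rw [eK_apply, map_smul, map_sum]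
  congr 1
  have key : ∀ σ : KK r m,
      TensorInv.permRep k V (r * m) τ
        (TensorInv.permRep k V (r * m) (σ : Equiv.Perm (Fin (r * m))) x)
      = TensorInv.permRep k V (r * m) (((⟨τ, hτ⟩ : KK r m) * σ : KK r m) : Equiv.Perm (Fin (r * m))) x := by
    intro σ
    rw [Subgroup.coe_mul, _root_.map_mul]
    rfl
  rw [Fintype.sum_congr _ _ key]
  exact Fintype.sum_equiv (Equiv.mulLeft (⟨τ, hτ⟩ : KK r m)) _ _ (fun σ => rfl)

theorem eK_apply_fixed [CharZero k] (x : ⨂[k]^(r * m) V)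
    (hx : ∀ τ ∈ KK r m, TensorInv.permRep k V (r * m) τ x = x) : eK r m x = x := by
  rw [eK_apply]
  have : ∀ σ : KK r m,
      TensorInv.permRep k V (r * m) (σ : Equiv.Perm (Fin (r * m))) x = x :=
    fun σ => hx σ σ.2
  rw [Fintype.sum_congr _ _ this, Finset.sum_const, Finset.card_univ,
    ← Nat.cast_smul_eq_nsmul k, smul_smul, inv_mul_cancel₀ card_KK_ne_zero, one_smul]

theorem eK_tpow_comm (ρ : Representation k G V) (g : G) (x : ⨂[k]^(r * m) V) :
    eK r m (TensorInv.tpowRep ρ (r * m) g x) = TensorInv.tpowRep ρ (r * m) g (eK r m x) := by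
  rw [eK_apply, eK_apply, map_smul, map_sum]
  congr 1
  refine Finset.sum_congr rfl fun σ _ => ?_
  have := TensorInv.perm_tpow_comm ρ (r * m) (σ : Equiv.Perm (Fin (r * m))) g
  exact LinearMap.congr_fun this x

theorem eK_tprod_perm [CharZero k] (σ : Equiv.Perm (Fin (r * m))) (hσ : σ ∈ KK r m)
    (v : Fin (r * m) → V) :
    eK r m (V := V) (tprod k (fun p => v (σ p))) = eK r m (tprod k v) := by
  have h1 : tprod k (fun p => v (σ p)) = TensorInv.permRep k V (r * m) σ⁻¹ (tprod k v) := by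
    rw [permRep_tprod]
    rfl
  rw [h1, eK_perm_apply _ ((KK r m).inv_mem hσ)]

end Aux2

section Aux3

open PiTensorProduct Function

theorem symRel_mk_perm {n : ℕ} {M : Type} [AddCommGroup M] [Module k M]
    (u : Fin n → M) (e : Equiv.Perm (Fin n)) :
    (Submodule.Quotient.mk (tprod k fun j => u (e j)) : SymPow k M n) =
      Submodule.Quotient.mk (tprod k u) := by
  rw [Submodule.Quotient.eq]
  rw [show (tprod k fun j => u (e j)) - tprod k u
      = -((tprod k u) - tprod k fun j => u (e j)) from (neg_sub _ _).symm]
  exact Submodule.neg_mem _ (Submodule.subset_span ⟨u, e, rfl⟩)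

theorem tpowRep_tprod {U : Type} [AddCommGroup U] [Module k U]
    (ρ' : Representation k G U) (n : ℕ) (g : G) (v : Fin n → U) :
    tpowRep ρ' n g (tprod k v) = tprod k (fun p => ρ' g (v p)) := by
  show PiTensorProduct.map _ (tprod k v) = _
  rw [map_tprod]

theorem symPowRep_mk {U : Type} [AddCommGroup U] [Module k U]
    (ρ' : Representation k G U) (n : ℕ) (g : G) (x : ⨂[k]^n U) :
    symPowRep ρ' n g (Submodule.Quotient.mk x) =
      Submodule.Quotient.mk (tpowRep ρ' n g x) := by
  show Submodule.mapQ _ _ _ (symRel_le_comap ρ' n g) (Submodule.Quotient.mk x) = _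
  rw [Submodule.mapQ_apply]

variable (r m : ℕ)

theorem block_update [DecidableEq (Fin (r * m))] (v : Fin (r * m) → V) (p : Fin (r * m)) (z : V) :
    (fun i => tprod k (fun j => update v p z (idx r m i j))) =
      update (fun i => tprod k fun j => v (idx r m i j)) (bi r m p)
        (tprod k (update (fun j => v (idx r m (bi r m p) j)) (bj r m p) z)) := by
  funext i
  rcases eq_or_ne i (bi r m p) with rfl | hi
  · rw [update_self]
    congr 1
    funext j
    rcases eq_or_ne j (bj r m p) with rfl | hj
    · rw [idx_bi_bj, update_self, update_self]
    · rw [update_of_ne hj, update_of_ne (fun hc => hj (by rw [← bj_idx (bi r m p) j, hc]))]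
  · rw [update_of_ne hi]
    congr 1
    funext j
    rw [update_of_ne (fun hc => hi (by rw [← bi_idx i j, hc]))]

/-- The multilinear map `v ↦ ⊗ᵢ (⊗ⱼ v_{im+j})`. -/
def F0 : MultilinearMap k (fun _ : Fin (r * m) => V) (⨂[k]^r (⨂[k]^m V)) where
  toFun v := tprod k fun i => tprod k fun j => v (idx r m i j)
  map_update_add' := by
    intro dec v p x y
    beta_reduce
    rw [block_update, block_update, block_update, MultilinearMap.map_update_add,
      MultilinearMap.map_update_add]
  map_update_smul' := by
    intro dec v p c x
    beta_reduce
    rw [block_update, block_update, MultilinearMap.map_update_smul,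
      MultilinearMap.map_update_smul]

@[simp] theorem F0_apply (v : Fin (r * m) → V) :
    F0 r m v = tprod k fun i => tprod k fun j => v (idx r m i j) := rfl

/-- The quotient map `V^{⊗r} → Sym^r V`, stated generically. -/
def symMkQ (k M : Type) [Field k] [AddCommGroup M] [Module k M] (r : ℕ) :
    (⨂[k]^r M) →ₗ[k] SymPow k M r := (symRel k M r).mkQ

/-- The natural surjection `V^{⊗rm} → Sym^r(Sym^m V)`. -/
def qMap : (⨂[k]^(r * m) V) →ₗ[k] SymPow k (SymPow k V m) r :=
  symMkQ k (SymPow k V m) r ∘ₗ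
    (PiTensorProduct.map fun _ => (symRel k V m).mkQ) ∘ₗ lift (F0 r m)

variable {r m}

theorem qMap_tprod (v : Fin (r * m) → V) :
    qMap r m (tprod k v) = Submodule.Quotient.mk
      (tprod k fun i =>
        (Submodule.Quotient.mk (tprod k fun j => v (idx r m i j)) : SymPow k V m)) := by
  simp only [qMap, LinearMap.comp_apply, lift.tprod, F0_apply, map_tprod]
  rfl

variable (r m)

/-- `v ↦ mk (⊗ᵢ mk (v i))` as a multilinear map. -/
def Phi1 : MultilinearMap k (fun _ : Fin r => ⨂[k]^m V) (SymPow k (SymPow k V m) r) :=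
  (symMkQ k (SymPow k V m) r).compMultilinearMap
    ((PiTensorProduct.tprod k (s := fun _ : Fin r => SymPow k V m)).compLinearMap
      fun _ => (symRel k V m).mkQ)

variable {r m}

theorem Phi1_apply (v : Fin r → ⨂[k]^m V) :
    Phi1 r m v = Submodule.Quotient.mk
      (tprod k fun i => (Submodule.Quotient.mk (v i) : SymPow k V m)) := rfl

set_option maxHeartbeats 1000000 in
theorem Phi1_mem_range (v : Fin r → ⨂[k]^m V) :
    Phi1 r m v ∈ LinearMap.range (qMap r m) := by
  refine multilinear_span_mem (Phi1 r m)
    (Set.range (PiTensorProduct.tprod k (s := fun _ : Fin m => V)))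
    span_tprod_eq_top (LinearMap.range (qMap (k := k) (V := V) r m)) ?_ v
  rintro w hw
  choose x hx using hw
  have hw' : w = fun i => tprod k (x i) := funext fun i => (hx i).symm
  subst hw'
  refine ⟨tprod k (fun p => x (bi r m p) (bj r m p)), ?_⟩
  rw [qMap_tprod, Phi1_apply]
  congr 1
  congr 1
  funext i
  congr 1
  congr 1
  funext j
  rw [bi_idx, bj_idx]

theorem qMap_surjective : Function.Surjective (qMap (k := k) (V := V) r m) := by
  intro y
  obtain ⟨t, rfl⟩ := Submodule.Quotient.mk_surjective _ y
  have ht : t ∈ Submodule.span k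
      (Set.range (PiTensorProduct.tprod k (s := fun _ : Fin r => SymPow k V m))) := by
    rw [span_tprod_eq_top]; exact Submodule.mem_top
  refine Submodule.span_induction (p := fun x _ =>
    ∃ a, qMap r m a = Submodule.Quotient.mk x) ?_ ?_ ?_ ?_ ht
  · rintro x ⟨w, rfl⟩
    set z : Fin r → ⨂[k]^m V :=
      fun i => surjInv (Submodule.Quotient.mk_surjective _) (w i) with hzdef
    have hz : ∀ i, (Submodule.Quotient.mk (z i) : SymPow k V m) = w i :=
      fun i => surjInv_eq _ _
    obtain ⟨a, ha⟩ := Phi1_mem_range z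
    refine ⟨a, ha.trans ?_⟩
    rw [Phi1_apply]
    congr 1
    congr 1
    funext i
    exact hz i
  · exact ⟨0, by simp⟩
  · rintro x y _ _ ⟨a, ha⟩ ⟨b, hb⟩
    exact ⟨a + b, by rw [map_add, ha, hb, ← Submodule.Quotient.mk_add]⟩
  · rintro c x _ ⟨a, ha⟩
    exact ⟨c • a, by rw [map_smul, ha, ← Submodule.Quotient.mk_smul]⟩

theorem qMap_perm (σ : Equiv.Perm (Fin (r * m))) (hσ : σ ∈ KK r m) :
    (qMap r m (V := V)) ∘ₗ permRep k V (r * m) σ = qMap r m := by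
  apply PiTensorProduct.ext; apply MultilinearMap.ext; intro v
  simp only [LinearMap.compMultilinearMap_apply, LinearMap.comp_apply]
  rw [permRep_tprod, qMap_tprod, qMap_tprod]
  obtain ⟨τ, hτ⟩ := (blockWreath_iff σ⁻¹).1 ((KK r m).inv_mem hσ)
  have hbi : ∀ (i : Fin r) (j : Fin m), bi r m (σ⁻¹ (idx r m i j)) = τ i := by
    intro i j; rw [hτ, bi_idx]
  have hdec : ∀ (i : Fin r) (j : Fin m),
      σ⁻¹ (idx r m i j) = idx r m (τ i) (bj r m (σ⁻¹ (idx r m i j))) := by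
    intro i j
    conv_lhs => rw [← idx_bi_bj (σ⁻¹ (idx r m i j))]
    rw [hbi]
  have hinj : ∀ i : Fin r, Function.Injective (fun j => bj r m (σ⁻¹ (idx r m i j))) := by
    intro i j j' h
    have heq : σ⁻¹ (idx r m i j) = σ⁻¹ (idx r m i j') := by
      rw [hdec i j, hdec i j']
      simp only at h
      rw [h]
    exact (idx_inj (σ⁻¹.injective heq)).2
  have step1 : ∀ i : Fin r,
      (Submodule.Quotient.mk (tprod k fun j => v (σ.symm (idx r m i j))) : SymPow k V m)
        = Submodule.Quotient.mk (tprod k fun j => v (idx r m (τ i) j)) := by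
    intro i
    have hbij := Finite.injective_iff_bijective.1 (hinj i)
    set ψ : Equiv.Perm (Fin m) := Equiv.ofBijective _ hbij with hψdef
    have hfun : (fun j => v (σ.symm (idx r m i j)))
        = fun j => (fun j' => v (idx r m (τ i) j')) (ψ j) := by
      funext j
      show v (σ⁻¹ (idx r m i j)) = v (idx r m (τ i) (bj r m (σ⁻¹ (idx r m i j))))
      rw [← hdec i j]
    rw [hfun]
    exact symRel_mk_perm (k := k) (M := V) (fun j' => v (idx r m (τ i) j')) ψ
  have houter : (fun i => (Submodule.Quotient.mk
        (tprod k fun j => v (σ.symm (idx r m i j))) : SymPow k V m))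
      = fun i => (fun i' => (Submodule.Quotient.mk
        (tprod k fun j => v (idx r m i' j)) : SymPow k V m)) (τ i) :=
    funext fun i => step1 i
  rw [houter]
  exact symRel_mk_perm (k := k) (M := SymPow k V m)
    (fun i' => (Submodule.Quotient.mk (tprod k fun j => v (idx r m i' j)) : SymPow k V m)) τ

theorem qMap_eK [CharZero k] (x : ⨂[k]^(r * m) V) :
    qMap r m (eK r m x) = qMap r m x := by
  rw [eK_apply, map_smul, map_sum]
  have key : ∀ σ : KK r m,
      qMap r m (permRep k V (r * m) (σ : Equiv.Perm (Fin (r * m))) x) = qMap r m x :=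
    fun σ => LinearMap.congr_fun (qMap_perm _ σ.2) x
  rw [Fintype.sum_congr _ _ key, Finset.sum_const, Finset.card_univ,
    ← Nat.cast_smul_eq_nsmul k, smul_smul, inv_mul_cancel₀ card_KK_ne_zero, one_smul]

theorem qMap_equivariant (ρ : Representation k G V) (g : G) :
    qMap r m ∘ₗ tpowRep ρ (r * m) g = symPowRep (symPowRep ρ m) r g ∘ₗ qMap r m := by
  apply PiTensorProduct.ext; apply MultilinearMap.ext; intro v
  simp only [LinearMap.compMultilinearMap_apply, LinearMap.comp_apply]
  rw [tpowRep_tprod, qMap_tprod, qMap_tprod, symPowRep_mk, tpowRep_tprod]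
  congr 1
  congr 1
  funext i
  rw [symPowRep_mk, tpowRep_tprod]

end Aux3

section Aux4

open PiTensorProduct Function

variable (m : ℕ)

/-- Flattening `(V^{⊗m})^{⊗r} → V^{⊗rm}`. -/
noncomputable def flatten : (r : ℕ) → (⨂[k]^r (⨂[k]^m V)) →ₗ[k] ⨂[k]^(r * m) V
  | 0 =>
    (TensorPower.cast k V (Nat.zero_mul m).symm).toLinearMap ∘ₗ
      (TensorPower.algebraMap₀ (R := k) (M := V)).toLinearMap ∘ₗ
      (PiTensorProduct.isEmptyEquiv (Fin 0)).toLinearMap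
  | (r + 1) =>
    (TensorPower.cast k V (Nat.succ_mul r m).symm).toLinearMap ∘ₗ
      (TensorPower.mulEquiv (R := k) (M := V) (n := r * m) (m := m)).toLinearMap ∘ₗ
      (TensorProduct.map (flatten r)
        (PiTensorProduct.subsingletonEquiv (0 : Fin 1) (s := fun _ => ⨂[k]^m V)).toLinearMap) ∘ₗ
      ((TensorPower.mulEquiv (R := k) (M := ⨂[k]^m V) (n := r) (m := 1)).symm).toLinearMap

variable {m}

theorem flatten_tprod : ∀ (r : ℕ) (x : Fin r → Fin m → V),
    flatten m r (tprod k fun i => tprod k (x i))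
      = tprod k (fun p => x (bi r m p) (bj r m p)) := by
  intro r
  induction r with
  | zero =>
    intro x
    have h0 : ∀ f g : Fin (0 * m) → V, tprod k f = tprod k g :=
      fun f g => congrArg _ (funext fun p => absurd p.2 (by simp))
    show (TensorPower.cast k V (Nat.zero_mul m).symm)
        ((TensorPower.algebraMap₀ (R := k) (M := V))
          ((PiTensorProduct.isEmptyEquiv (Fin 0)) (tprod k fun i => tprod k (x i)))) = _
    rw [isEmptyEquiv_apply_tprod]
    rw [show ((TensorPower.algebraMap₀ (R := k) (M := V)) 1 : ⨂[k]^0 V)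
        = tprod k (@Fin.elim0 V) from TensorPower.algebraMap₀_one]
    rw [TensorPower.cast_tprod]
    exact h0 _ _
  | succ r ih =>
    intro x
    have hsplit : (fun i : Fin (r + 1) => tprod k (x i)) =
        Fin.append (fun i : Fin r => tprod k (x (Fin.castAdd 1 i)))
          (fun i : Fin 1 => tprod k (x (Fin.natAdd r i))) := by
      funext p
      refine Fin.addCases (fun i => ?_) (fun i => ?_) p
      · rw [Fin.append_left]
      · rw [Fin.append_right]
    have hmul : (tprod k fun i : Fin (r+1) => tprod k (x i))
        = TensorPower.mulEquiv (R := k) (M := ⨂[k]^m V) (n := r) (m := 1)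
            ((tprod k fun i : Fin r => tprod k (x (Fin.castAdd 1 i))) ⊗ₜ[k]
             (tprod k fun i : Fin 1 => tprod k (x (Fin.natAdd r i)))) := by
      rw [hsplit, ← TensorPower.tprod_mul_tprod, TensorPower.gMul_def]
    show (TensorPower.cast k V (Nat.succ_mul r m).symm)
        ((TensorPower.mulEquiv (R := k) (M := V) (n := r * m) (m := m))
          ((TensorProduct.map (flatten m r)
            (PiTensorProduct.subsingletonEquiv (0 : Fin 1) (s := fun _ => ⨂[k]^m V)).toLinearMap)
            ((TensorPower.mulEquiv (R := k) (M := ⨂[k]^m V) (n := r) (m := 1)).symm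
              (tprod k fun i : Fin (r+1) => tprod k (x i))))) = _
    rw [hmul, LinearEquiv.symm_apply_apply, TensorProduct.map_tmul]
    show (TensorPower.cast k V (Nat.succ_mul r m).symm)
        ((TensorPower.mulEquiv (R := k) (M := V) (n := r * m) (m := m))
          ((flatten m r (tprod k fun i : Fin r => tprod k (x (Fin.castAdd 1 i)))) ⊗ₜ[k]
            (PiTensorProduct.subsingletonEquiv (0 : Fin 1)
              (tprod k fun i : Fin 1 => tprod k (x (Fin.natAdd r i)))))) = _
    rw [ih (fun i => x (Fin.castAdd 1 i)), subsingletonEquiv_apply_tprod]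
    rw [← TensorPower.gMul_def, TensorPower.tprod_mul_tprod, TensorPower.cast_tprod]
    refine congrArg _ (funext fun p => ?_)
    have hm : 0 < m := m_pos (r+1) m p
    rcases lt_or_ge ((p : ℕ)) (r * m) with hp | hp
    · have hcast : Fin.cast (Nat.succ_mul r m) p = Fin.castAdd m ⟨(p:ℕ), hp⟩ :=
        Fin.ext rfl
      show (Fin.append _ _) (Fin.cast _ p) = _
      rw [show (Fin.cast ((Nat.succ_mul r m).symm).symm p : Fin (r * m + m))
          = Fin.castAdd m ⟨(p:ℕ), hp⟩ from Fin.ext rfl, Fin.append_left]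
      have e1 : Fin.castAdd 1 (bi r m ⟨(p:ℕ), hp⟩) = bi (r+1) m p := Fin.ext rfl
      have e2 : bj r m ⟨(p:ℕ), hp⟩ = bj (r+1) m p := Fin.ext rfl
      show x (Fin.castAdd 1 (bi r m ⟨(p:ℕ), hp⟩)) (bj r m ⟨(p:ℕ), hp⟩) = _
      rw [e1, e2]
    · have hlt : (p:ℕ) - r * m < m := by
        have h2 : (p : ℕ) < r * m + m := lt_of_lt_of_le p.2 (le_of_eq (Nat.succ_mul r m))
        omega
      have hpc : (p:ℕ) = m * r + ((p:ℕ) - r * m) := by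
        have hcm : m * r = r * m := Nat.mul_comm m r
        omega
      have hdiv : (p:ℕ) / m = r := by
        rw [hpc, Nat.mul_add_div hm, Nat.div_eq_of_lt hlt, Nat.add_zero]
      have hmod : (p:ℕ) % m = (p:ℕ) - r * m := by
        conv_lhs => rw [hpc]
        rw [Nat.mul_add_mod, Nat.mod_eq_of_lt hlt]
      show (Fin.append _ _) (Fin.cast _ p) = _
      rw [show (Fin.cast ((Nat.succ_mul r m).symm).symm p : Fin (r * m + m))
          = Fin.natAdd (r * m) ⟨(p:ℕ) - r * m, hlt⟩ from Fin.ext (by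
            show (p:ℕ) = r * m + ((p:ℕ) - r * m); omega), Fin.append_right]
      have e1 : Fin.natAdd r (0 : Fin 1) = bi (r+1) m p := Fin.ext (by
        show r + 0 = (p:ℕ) / m
        rw [hdiv, Nat.add_zero])
      have e2 : (⟨(p:ℕ) - r * m, hlt⟩ : Fin m) = bj (r+1) m p := Fin.ext (by
        show (p:ℕ) - r * m = (p:ℕ) % m
        rw [hmod])
      show x (Fin.natAdd r (0 : Fin 1)) (⟨(p:ℕ) - r * m, hlt⟩ : Fin m) = _
      rw [e1, e2]

end Aux4

section Aux5

open PiTensorProduct Function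

theorem multilinear_descend {rr : ℕ} {M N : Type} [AddCommGroup M] [Module k M]
    [AddCommGroup N] [Module k N]
    (P : Submodule k M) (f : MultilinearMap k (fun _ : Fin rr => M) N)
    (hf : ∀ (v : Fin rr → M) (i : Fin rr), v i ∈ P → f v = 0) :
    ∃ g : MultilinearMap k (fun _ : Fin rr => M ⧸ P) N,
      ∀ v : Fin rr → M, g (fun i => Submodule.Quotient.mk (v i)) = f v := by
  classical
  have wd : ∀ v v' : Fin rr → M,
      (∀ i, (Submodule.Quotient.mk (v i) : M ⧸ P) = Submodule.Quotient.mk (v' i)) →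
      f v = f v' := by
    intro v v' hvv
    have key : ∀ s : Finset (Fin rr),
        f (fun i => if i ∈ s then v' i else v i) = f v := by
      intro s
      induction s using Finset.induction with
      | empty => simp
      | @insert j s hj ih =>
        have huu : (fun i => if i ∈ insert j s then v' i else v i) =
            update (fun i => if i ∈ s then v' i else v i) j (v' j) := by
          funext i
          rcases eq_or_ne i j with rfl | hij
          · simp [hj]
          · simp [Finset.mem_insert, hij]
        have h1 : update (fun i => if i ∈ s then v' i else v i) j (v j)
            = (fun i => if i ∈ s then v' i else v i) := by
          funext i
          rcases eq_or_ne i j with rfl | hij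
          · simp [hj]
          · simp [hij]
        have h0 : f (update (fun i => if i ∈ s then v' i else v i) j (v' j)) -
            f (update (fun i => if i ∈ s then v' i else v i) j (v j)) = 0 := by
          rw [← MultilinearMap.map_update_sub]
          refine hf _ j ?_
          rw [update_self]
          exact (Submodule.Quotient.eq P).1 ((hvv j).symm)
        calc f (fun i => if i ∈ insert j s then v' i else v i)
            = f (update (fun i => if i ∈ s then v' i else v i) j (v' j)) := by rw [huu]
          _ = f (update (fun i => if i ∈ s then v' i else v i) j (v j)) := sub_eq_zero.1 h0
          _ = f (fun i => if i ∈ s then v' i else v i) := by rw [h1]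
          _ = f v := ih
    have huniv := key Finset.univ
    simp only [Finset.mem_univ, if_true] at huniv
    exact huniv.symm
  set rep : M ⧸ P → M := surjInv (Submodule.Quotient.mk_surjective P) with hrepdef
  have hrep : ∀ a : M ⧸ P, (Submodule.Quotient.mk (rep a) : M ⧸ P) = a :=
    fun a => surjInv_eq _ a
  refine ⟨{ toFun := fun w => f (fun i => rep (w i)),
            map_update_add' := ?_, map_update_smul' := ?_ }, ?_⟩
  · intro dec w i x y
    have hconv : ∀ z : M ⧸ P, (fun jj => rep (@update _ _ dec w i z jj))
        = update (fun jj => rep (w jj)) i (rep z) := by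
      intro z
      funext jj
      rcases eq_or_ne jj i with rfl | hij
      · rw [update_self, update_self]
      · rw [update_of_ne hij, update_of_ne hij]
    beta_reduce
    rw [hconv, hconv, hconv]
    have hadd := wd (update (fun jj => rep (w jj)) i (rep (x + y)))
      (update (fun jj => rep (w jj)) i (rep x + rep y)) ?_
    · rw [hadd, MultilinearMap.map_update_add]
    · intro jj
      rcases eq_or_ne jj i with rfl | hij
      · rw [update_self, update_self, Submodule.Quotient.mk_add, hrep, hrep, hrep]
      · rw [update_of_ne hij, update_of_ne hij]
  · intro dec w i c x
    have hconv : ∀ z : M ⧸ P, (fun jj => rep (@update _ _ dec w i z jj))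
        = update (fun jj => rep (w jj)) i (rep z) := by
      intro z
      funext jj
      rcases eq_or_ne jj i with rfl | hij
      · rw [update_self, update_self]
      · rw [update_of_ne hij, update_of_ne hij]
    beta_reduce
    rw [hconv, hconv]
    have hsmul := wd (update (fun jj => rep (w jj)) i (rep (c • x)))
      (update (fun jj => rep (w jj)) i (c • rep x)) ?_
    · rw [hsmul, MultilinearMap.map_update_smul]
    · intro jj
      rcases eq_or_ne jj i with rfl | hij
      · rw [update_self, update_self, Submodule.Quotient.mk_smul, hrep, hrep]
      · rw [update_of_ne hij, update_of_ne hij]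
  · intro v
    exact wd _ v (fun i => by rw [hrep])

variable (r m : ℕ)

/-- The composite `(V^{⊗m})^{⊗r} → V^{⊗rm} → V^{⊗rm}` of flattening and averaging. -/
noncomputable def ekf : (⨂[k]^r (⨂[k]^m V)) →ₗ[k] ⨂[k]^(r * m) V :=
  eK r m ∘ₗ flatten m r

variable {r m}

theorem ekf_inner [CharZero k] (i₀ : Fin r) (π : Equiv.Perm (Fin m)) :
    ekf (k := k) (V := V) r m ∘ₗ PiTensorProduct.map
      (update (fun _ : Fin r => (LinearMap.id : (⨂[k]^m V) →ₗ[k] ⨂[k]^m V)) i₀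
        (permRep k V m π)) = ekf r m := by
  apply ext_tprod_tprod
  intro x
  simp only [LinearMap.comp_apply]
  rw [map_tprod]
  have hfun : (fun i => (update (fun _ : Fin r =>
        (LinearMap.id : (⨂[k]^m V) →ₗ[k] ⨂[k]^m V)) i₀ (permRep k V m π) i)
          (tprod k (x i)))
      = fun i => tprod k ((update x i₀ (fun j => x i₀ (π.symm j))) i) := by
    funext i
    rcases eq_or_ne i i₀ with rfl | hi
    · rw [update_self, update_self, permRep_tprod]
    · rw [update_of_ne hi, update_of_ne hi]
      rfl
  rw [hfun]
  show eK r m (flatten m r _) = eK r m (flatten m r _)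
  rw [flatten_tprod, flatten_tprod]
  rw [show (fun p => (update x i₀ (fun j => x i₀ (π.symm j))) (bi r m p) (bj r m p))
      = fun p => (fun p' => x (bi r m p') (bj r m p')) (innerPerm i₀ π.symm p) from
    funext fun p => by
      rcases eq_or_ne (bi r m p) i₀ with h | h
      · beta_reduce
        rw [h, update_self, innerPerm_apply, if_pos h, bi_idx, bj_idx]
      · beta_reduce
        rw [update_of_ne h, innerPerm_apply, if_neg h]]
  exact eK_tprod_perm (k := k) (V := V) _ (innerPerm_mem i₀ π.symm)
    (fun p' => x (bi r m p') (bj r m p'))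

theorem ekf_outer [CharZero k] (τ : Equiv.Perm (Fin r)) :
    ekf (k := k) (V := V) r m ∘ₗ permRep k (⨂[k]^m V) r τ = ekf r m := by
  apply ext_tprod_tprod
  intro x
  simp only [LinearMap.comp_apply]
  rw [permRep_tprod]
  have hb : (fun p => (fun i => tprod k (x i)) (τ.symm p))
      = fun p => tprod k (x (τ.symm p)) := rfl
  rw [hb]
  show eK r m (flatten m r _) = eK r m (flatten m r _)
  rw [flatten_tprod, flatten_tprod]
  rw [show (fun p => x (τ.symm (bi r m p)) (bj r m p))
      = fun p => (fun p' => x (bi r m p') (bj r m p')) (outerPerm τ.symm p) from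
    funext fun p => by
      beta_reduce
      rw [outerPerm_apply, bi_idx, bj_idx]]
  exact eK_tprod_perm (k := k) (V := V) _ (outerPerm_mem τ.symm)
    (fun p' => x (bi r m p') (bj r m p'))

theorem ekf_vanish [CharZero k] (v : Fin r → ⨂[k]^m V) (i₀ : Fin r)
    (hv : v i₀ ∈ symRel k V m) : ekf r m (tprod k v) = 0 := by
  classical
  set D : (⨂[k]^m V) →ₗ[k] ⨂[k]^(r * m) V :=
    ((ekf r m).compMultilinearMap (tprod k)).toLinearMap v i₀ with hD
  have hDapp : ∀ y, D y = ekf r m (tprod k (update v i₀ y)) := fun y => rfl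
  have hDperm : ∀ (π : Equiv.Perm (Fin m)) (y : ⨂[k]^m V),
      D (permRep k V m π y) = D y := by
    intro π y
    rw [hDapp, hDapp]
    have hmap2 : PiTensorProduct.map
        (update (fun _ : Fin r => (LinearMap.id : (⨂[k]^m V) →ₗ[k] ⨂[k]^m V)) i₀
          (permRep k V m π))
        (tprod k (update v i₀ y)) = tprod k (update v i₀ (permRep k V m π y)) := by
      rw [map_tprod]
      refine congrArg _ (funext fun i => ?_)
      rcases eq_or_ne i i₀ with rfl | hi
      · rw [update_self, update_self, update_self]
      · rw [update_of_ne hi, update_of_ne hi, update_of_ne hi]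
        rfl
    rw [← hmap2]
    exact LinearMap.congr_fun (ekf_inner i₀ π) (tprod k (update v i₀ y))
  have hker : symRel k V m ≤ LinearMap.ker D := by
    refine Submodule.span_le.2 ?_
    rintro y ⟨u, π, rfl⟩
    simp only [SetLike.mem_coe, LinearMap.mem_ker, map_sub]
    have hperm : (tprod k fun j => u (π j)) = permRep k V m π⁻¹ (tprod k u) := by
      rw [permRep_tprod]
      exact congrArg _ (funext fun p => by rw [Equiv.Perm.inv_def, Equiv.symm_symm])
    rw [hperm, hDperm, sub_self]
  have hmem := hker hv
  rw [LinearMap.mem_ker, hDapp, update_eq_self] at hmem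
  exact hmem

variable (r m)

theorem g1Ex [CharZero k] :
    ∃ g : MultilinearMap k (fun _ : Fin r => SymPow k V m) (⨂[k]^(r * m) V),
      ∀ v : Fin r → ⨂[k]^m V,
        g (fun i => Submodule.Quotient.mk (v i)) = ekf r m (tprod k v) :=
  multilinear_descend (symRel k V m) ((ekf r m).compMultilinearMap (tprod k))
    (fun v i hv => ekf_vanish v i hv)

/-- The descended multilinear map `Sym^m V × ⋯ × Sym^m V → V^{⊗rm}`. -/
noncomputable def g1 [CharZero k] :
    MultilinearMap k (fun _ : Fin r => SymPow k V m) (⨂[k]^(r * m) V) :=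
  (g1Ex r m).choose

theorem g1_spec [CharZero k] (v : Fin r → ⨂[k]^m V) :
    g1 (k := k) (V := V) r m (fun i => Submodule.Quotient.mk (v i)) = ekf r m (tprod k v) :=
  (g1Ex r m).choose_spec v

theorem h1_ker [CharZero k] :
    symRel k (SymPow k V m) r ≤ LinearMap.ker (lift (g1 r m (V := V))) := by
  refine Submodule.span_le.2 ?_
  rintro y ⟨w, σ, rfl⟩
  simp only [SetLike.mem_coe, LinearMap.mem_ker, map_sub]
  set z : Fin r → ⨂[k]^m V :=
    fun i => surjInv (Submodule.Quotient.mk_surjective (symRel k V m)) (w i) with hz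
  have hzw : ∀ i, (Submodule.Quotient.mk (z i) : SymPow k V m) = w i :=
    fun i => surjInv_eq _ _
  have h1 : lift (g1 r m) (tprod k w) = ekf r m (tprod k z) := by
    have hw : tprod k w = tprod k (fun i => (Submodule.Quotient.mk (z i) : SymPow k V m)) :=
      congrArg _ (funext fun i => (hzw i).symm)
    rw [hw, lift.tprod]
    exact g1_spec r m z
  have h2 : lift (g1 r m) (tprod k (fun i => w (σ i))) =
      ekf r m (tprod k (fun i => z (σ i))) := by
    have hw : (tprod k fun i => w (σ i))
        = tprod k (fun i => (Submodule.Quotient.mk (z (σ i)) : SymPow k V m)) :=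
      congrArg _ (funext fun i => (hzw (σ i)).symm)
    rw [hw, lift.tprod]
    exact g1_spec r m (fun i => z (σ i))
  have h3 : ekf r m (tprod k (fun i => z (σ i))) = ekf r m (tprod k z) := by
    have hperm : (tprod k fun i => z (σ i)) = permRep k (⨂[k]^m V) r σ⁻¹ (tprod k z) := by
      rw [permRep_tprod]
      exact congrArg _ (funext fun p => by rw [Equiv.Perm.inv_def, Equiv.symm_symm])
    rw [hperm]
    exact LinearMap.congr_fun (ekf_outer σ⁻¹) (tprod k z)
  rw [h1, h2, h3, sub_self]

/-- The retraction `Sym^r(Sym^m V) → V^{⊗rm}` given by averaging over `K`. -/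
noncomputable def hmap [CharZero k] : SymPow k (SymPow k V m) r →ₗ[k] ⨂[k]^(r * m) V :=
  Submodule.liftQ _ (lift (g1 r m)) (h1_ker r m)

set_option maxHeartbeats 2000000 in
theorem hmap_mk [CharZero k] (x : ⨂[k]^r (SymPow k V m)) :
    hmap (k := k) (V := V) r m (Submodule.Quotient.mk x) = lift (g1 r m) x := rfl

theorem hmap_q [CharZero k] : hmap (k := k) (V := V) r m ∘ₗ qMap r m = eK r m := by
  apply PiTensorProduct.ext; apply MultilinearMap.ext; intro v
  simp only [LinearMap.compMultilinearMap_apply, LinearMap.comp_apply]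
  rw [qMap_tprod, hmap_mk, lift.tprod]
  rw [g1_spec r m (fun i => tprod k fun j => v (idx r m i j))]
  show eK r m (flatten m r _) = _
  rw [flatten_tprod]
  refine congrArg _ (congrArg _ (funext fun p => ?_))
  rw [idx_bi_bj]

end Aux5

/-- In characteristic 0, the dimension of the space of `G`-invariant
vectors in `Sym^r(Sym^m V)` equals the dimension of the subspace of `K`-fixed vectors in
`(V^{⊗rm})^G`, where `K ≅ S_m ≀ S_r` is the wreath-product subgroup of `S_{rm}` permuting
the `r` consecutive blocks of size `m`, acting by permuting the tensor factors. -/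
theorem finrank_invariants_symPow_symPow [CharZero k] [FiniteDimensional k V]
    (r m : ℕ) (ρ : Representation k G V) :
    Module.finrank k (symPowRep (symPowRep ρ m) r).invariants =
      Module.finrank k (relVec ({p | ∃ g : G, p = (tpowRep ρ (r * m) g, 1)} ∪
        {p | ∃ σ : Equiv.Perm (Fin (r * m)), BlockWreath r m σ ∧
          p = (permRep k V (r * m) σ, (1 : k))})) := by
  classical
  have hmem : ∀ x : ⨂[k]^(r * m) V,
      x ∈ relVec ({p | ∃ g : G, p = (tpowRep ρ (r * m) g, 1)} ∪
        {p | ∃ σ : Equiv.Perm (Fin (r * m)), BlockWreath r m σ ∧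
          p = (permRep k V (r * m) σ, (1 : k))}) ↔
      ((∀ g : G, tpowRep ρ (r * m) g x = x) ∧
        ∀ σ ∈ KK r m, permRep k V (r * m) σ x = x) := by
    intro x
    constructor
    · intro hx
      constructor
      · intro g
        have := hx (tpowRep ρ (r * m) g, 1) (Or.inl ⟨g, rfl⟩)
        simpa using this
      · intro σ hσ
        have := hx (permRep k V (r * m) σ, (1 : k)) (Or.inr ⟨σ, hσ, rfl⟩)
        simpa using this
    · rintro ⟨h1, h2⟩ p hp
      rcases hp with ⟨g, rfl⟩ | ⟨σ, hσ, rfl⟩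
      · simpa using h1 g
      · simpa using h2 σ hσ
  have hforward : ∀ x : ⨂[k]^(r * m) V,
      (∀ g : G, tpowRep ρ (r * m) g x = x) →
      qMap r m x ∈ (symPowRep (symPowRep ρ m) r).invariants := by
    intro x h1
    rw [Representation.mem_invariants]
    intro g
    rw [← LinearMap.comp_apply, ← qMap_equivariant, LinearMap.comp_apply, h1 g]
  set RV : Submodule k (⨂[k]^(r * m) V) := relVec
      ({p | ∃ g : G, p = (tpowRep ρ (r * m) g, 1)} ∪
        {p | ∃ σ : Equiv.Perm (Fin (r * m)), BlockWreath r m σ ∧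
          p = (permRep k V (r * m) σ, (1 : k))}) with hRV
  set A : Submodule k (SymPow k (SymPow k V m) r) :=
    (symPowRep (symPowRep ρ m) r).invariants with hA
  let φ : RV →ₗ[k] A :=
    LinearMap.codRestrict A ((qMap r m).comp RV.subtype)
      (fun c => hforward c.1 ((hmem c.1).1 c.2).1)
  have hinj : Function.Injective φ := by
    intro a b hab
    have hq : qMap r m a.1 = qMap r m b.1 := congrArg Subtype.val hab
    apply Subtype.ext
    have ha := LinearMap.congr_fun (hmap_q (k := k) (V := V) r m) a.1
    have hb := LinearMap.congr_fun (hmap_q (k := k) (V := V) r m) b.1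
    have hKa : eK r m a.1 = a.1 := eK_apply_fixed a.1 ((hmem a.1).1 a.2).2
    have hKb : eK r m b.1 = b.1 := eK_apply_fixed b.1 ((hmem b.1).1 b.2).2
    calc a.1 = eK r m a.1 := hKa.symm
      _ = hmap r m (qMap r m a.1) := ha.symm
      _ = hmap r m (qMap r m b.1) := by rw [hq]
      _ = eK r m b.1 := hb
      _ = b.1 := hKb
  have hsurj : Function.Surjective φ := by
    rintro ⟨y, hy⟩
    obtain ⟨t, ht⟩ := qMap_surjective y
    have hy' : ∀ g : G, symPowRep (symPowRep ρ m) r g y = y :=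
      (Representation.mem_invariants _ y).1 hy
    refine ⟨⟨eK r m t, (hmem _).2 ⟨?_, ?_⟩⟩, ?_⟩
    · intro g
      have e1 : tpowRep ρ (r * m) g (eK r m t) = eK r m (tpowRep ρ (r * m) g t) :=
        (eK_tpow_comm ρ g t).symm
      have e2 : eK r m (tpowRep ρ (r * m) g t)
          = hmap r m (qMap r m (tpowRep ρ (r * m) g t)) :=
        (LinearMap.congr_fun (hmap_q (k := k) (V := V) r m) _).symm
      have e3 : qMap r m (tpowRep ρ (r * m) g t)
          = symPowRep (symPowRep ρ m) r g (qMap r m t) :=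
        LinearMap.congr_fun (qMap_equivariant ρ g) t
      rw [e1, e2, e3, ht, hy' g, ← ht]
      exact LinearMap.congr_fun (hmap_q (k := k) (V := V) r m) t
    · intro σ hσ
      exact perm_eK_apply σ hσ t
    · apply Subtype.ext
      show qMap r m (eK r m t) = y
      rw [qMap_eK, ht]
  exact (LinearEquiv.finrank_eq (LinearEquiv.ofBijective φ ⟨hinj, hsurj⟩)).symm


end TensorInv
end
end

section
/- Let n ≥ 1 and r be natural numbers and let V = ℂ^n be the defining representation of the special linear group SL(n, ℂ). If n does not divide r, then the space of SL(n, ℂ)-invariant vectors in the r-th tensor power V^{⊗r} is zero: (V^{⊗r})^{SL(n,ℂ)} = 0. -/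
/-!
Formalization of statements from "Tensor invariants" (arXiv:1402.6111).
-/

open scoped TensorProduct

noncomputable section

namespace TensorInv

variable {k G V W : Type} [Field k] [Group G]
  [AddCommGroup V] [Module k V] [AddCommGroup W] [Module k W]

/-- The defining representation of `SL(n, ℂ)` on `ℂⁿ`, by matrix-vector multiplication. -/
def slRep (n : ℕ) : Representation ℂ (Matrix.SpecialLinearGroup (Fin n) ℂ) (Fin n → ℂ) where
  toFun g := Matrix.mulVecLin g.1
  map_one' := by simp [Matrix.mulVecLin_one]; rfl
  map_mul' g h := by
    show Matrix.mulVecLin (g.1 * h.1) = _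
    rw [Matrix.mulVecLin_mul]; rfl

/-- If `n` does not divide `r`, the space of `SL(n, ℂ)`-invariant vectors
in `(ℂⁿ)^{⊗r}` is zero. -/
theorem invariants_tpow_slRep_eq_bot (n r : ℕ) (hn : 1 ≤ n) (h : ¬ n ∣ r) :
    (tpowRep (slRep n) r).invariants = ⊥ := by
  rw [eq_bot_iff]
  intro x hx
  have hζ : IsPrimitiveRoot (Complex.exp (2 * Real.pi * Complex.I / n)) n :=
    Complex.isPrimitiveRoot_exp n (by omega)
  set ζ : ℂ := Complex.exp (2 * Real.pi * Complex.I / n) with hζdef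
  have hdet : (ζ • (1 : Matrix (Fin n) (Fin n) ℂ)).det = 1 := by
    rw [Matrix.det_smul, Matrix.det_one, mul_one, Fintype.card_fin, hζ.pow_eq_one]
  set g : Matrix.SpecialLinearGroup (Fin n) ℂ := ⟨ζ • 1, hdet⟩ with hgdef
  have key : ∀ y : ⨂[ℂ]^r (Fin n → ℂ), tpowRep (slRep n) r g y = ζ ^ r • y := by
    intro y
    induction y using PiTensorProduct.induction_on with
    | smul_tprod c v =>
      have hmap : ∀ i : Fin r, slRep n g (v i) = ζ • v i := by
        intro i
        show Matrix.mulVecLin (ζ • (1 : Matrix (Fin n) (Fin n) ℂ)) (v i) = ζ • v i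
        simp [Matrix.mulVecLin_apply, Matrix.smul_mulVec, Matrix.one_mulVec]
      rw [map_smul]
      show c • PiTensorProduct.map (fun _ => slRep n g) (PiTensorProduct.tprod ℂ v) = _
      rw [PiTensorProduct.map_tprod]
      simp only [hmap]
      rw [MultilinearMap.map_smul_univ]
      simp only [Finset.prod_const, Finset.card_univ, Fintype.card_fin]
      rw [smul_comm]
    | add a b ha hb =>
      rw [map_add, ha, hb, smul_add]
  have hfix : tpowRep (slRep n) r g x = x := hx g
  rw [key x] at hfix
  have hne : ζ ^ r ≠ 1 := fun hc => h ((hζ.pow_eq_one_iff_dvd r).mp hc)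
  have : (ζ ^ r - 1) • x = 0 := by
    have e := sub_smul (ζ ^ r) 1 x
    rw [one_smul, hfix, sub_self] at e
    exact e
  rcases smul_eq_zero.mp this with h1 | h2
  · exact absurd (by linear_combination h1) hne
  · simp [h2]

end TensorInv
end
end

section
/- Let n ≥ 1 and r be natural numbers, and let V = ℂ^n be the defining permutation representation of the symmetric group S_n, acting by permuting the standard basis vectors. Then the dimension of the space of S_n-invariant vectors in V^{⊗r} equals the number of partitions of the set {1, …, r} into at most n nonempty blocks. -/
/-!
Formalization of statements from "Tensor invariants" (arXiv:1402.6111).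
-/

open scoped TensorProduct

noncomputable section

namespace TensorInv

variable {k G V W : Type} [Field k] [Group G]
  [AddCommGroup V] [Module k V] [AddCommGroup W] [Module k W]

/-- The defining permutation representation of the symmetric group `S_n` on `ℂⁿ`:
`(σ • v) i = v (σ⁻¹ i)`, i.e. `σ` permutes the standard basis vectors. -/
def permutationRep (n : ℕ) : Representation ℂ (Equiv.Perm (Fin n)) (Fin n → ℂ) where
  toFun σ := LinearMap.funLeft ℂ ℂ ⇑σ⁻¹
  map_one' := by ext v i; simp [LinearMap.funLeft]
  map_mul' σ τ := by ext v i; simp [LinearMap.funLeft]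

/-! ### Auxiliary material for Statement 14 -/

section Aux

open Finset

variable (n r : ℕ)

/-- The multilinear map `v ↦ (f ↦ ∏ i, v i (f i))`. -/
def toFunML : MultilinearMap ℂ (fun _ : Fin r => (Fin n → ℂ)) ((Fin r → Fin n) → ℂ) :=
  MultilinearMap.pi fun f =>
    (MultilinearMap.mkPiAlgebra ℂ (Fin r) ℂ).compLinearMap fun i => LinearMap.proj (f i)

lemma toFunML_apply (v : Fin r → Fin n → ℂ) (f : Fin r → Fin n) :
    toFunML n r v f = ∏ i, v i (f i) := rfl

/-- Coordinates map on the tensor power. -/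
def phiMap : (⨂[ℂ]^r (Fin n → ℂ)) →ₗ[ℂ] ((Fin r → Fin n) → ℂ) :=
  PiTensorProduct.lift (toFunML n r)

/-- Basis-type elements of the tensor power. -/
def deltaTensor (f : Fin r → Fin n) : ⨂[ℂ]^r (Fin n → ℂ) :=
  PiTensorProduct.tprod ℂ fun i => Pi.single (f i) 1

/-- Inverse of `phiMap`. -/
def psiMap : ((Fin r → Fin n) → ℂ) →ₗ[ℂ] ⨂[ℂ]^r (Fin n → ℂ) where
  toFun c := ∑ f : Fin r → Fin n, c f • deltaTensor n r f
  map_add' x y := by simp [add_smul, Finset.sum_add_distrib]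
  map_smul' c x := by simp [mul_smul, Finset.smul_sum]

lemma phiMap_tprod (v : Fin r → Fin n → ℂ) :
    phiMap n r (PiTensorProduct.tprod ℂ v) = fun f => ∏ i, v i (f i) := by
  rw [phiMap, PiTensorProduct.lift.tprod]; rfl

lemma phiMap_deltaTensor (f f' : Fin r → Fin n) :
    phiMap n r (deltaTensor n r f) f' = if f' = f then 1 else 0 := by
  rw [deltaTensor, phiMap_tprod]
  by_cases h : f' = f
  · subst h; simp
  · rw [if_neg h]
    obtain ⟨i, hi⟩ := Function.ne_iff.mp h
    exact Finset.prod_eq_zero (Finset.mem_univ i) (by simp [Pi.single_apply, hi])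

lemma phiMap_psiMap : (phiMap n r) ∘ₗ (psiMap n r) = LinearMap.id := by
  apply LinearMap.ext
  intro c
  simp only [LinearMap.comp_apply, LinearMap.id_apply]
  show phiMap n r (∑ f : Fin r → Fin n, c f • deltaTensor n r f) = c
  funext f'
  rw [map_sum]
  simp only [Finset.sum_apply, map_smul, Pi.smul_apply, phiMap_deltaTensor, smul_eq_mul,
    mul_ite, mul_one, mul_zero]
  simp

lemma psiMap_phiMap : (psiMap n r) ∘ₗ (phiMap n r) = LinearMap.id := by
  apply PiTensorProduct.ext
  apply MultilinearMap.ext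
  intro v
  simp only [LinearMap.compMultilinearMap_apply, LinearMap.comp_apply, LinearMap.id_apply]
  rw [phiMap_tprod]
  show (∑ f : Fin r → Fin n, (∏ i, v i (f i)) • deltaTensor n r f) = _
  have hv : ∀ i : Fin r, v i = ∑ j : Fin n, v i j • (Pi.single j 1 : Fin n → ℂ) := by
    intro i; funext x
    simp [Pi.single_apply, Finset.sum_ite_eq]
  conv_rhs => rw [show v = fun i => ∑ j : Fin n, v i j • (Pi.single j 1 : Fin n → ℂ) from
    funext fun i => hv i]
  rw [MultilinearMap.map_sum (PiTensorProduct.tprod ℂ)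
    (g := fun i j => v i j • (Pi.single j 1 : Fin n → ℂ))]
  refine Finset.sum_congr rfl fun f _ => ?_
  rw [MultilinearMap.map_smul_univ]
  rfl

/-- The coordinate linear equivalence `⨂[ℂ]^r ℂⁿ ≃ (Fin r → Fin n) → ℂ`. -/
def coordEquiv : (⨂[ℂ]^r (Fin n → ℂ)) ≃ₗ[ℂ] ((Fin r → Fin n) → ℂ) :=
  LinearEquiv.ofLinear (phiMap n r) (psiMap n r) (phiMap_psiMap n r) (psiMap_phiMap n r)

/-- The representation of `S_n` on functions `(Fin r → Fin n) → ℂ` induced by the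
action of `S_n` on `Fin r → Fin n`. -/
def funRep : Representation ℂ (Equiv.Perm (Fin n)) ((Fin r → Fin n) → ℂ) where
  toFun g := LinearMap.funLeft ℂ ℂ fun f => (g⁻¹ : Equiv.Perm (Fin n)) • f
  map_one' := by ext c f; simp [LinearMap.funLeft]
  map_mul' g h := by ext c f; simp [LinearMap.funLeft, mul_smul]

lemma phiMap_comm (g : Equiv.Perm (Fin n)) :
    (phiMap n r) ∘ₗ (tpowRep (permutationRep n) r g) = (funRep n r g) ∘ₗ (phiMap n r) := by
  apply PiTensorProduct.ext
  apply MultilinearMap.ext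
  intro v
  simp only [LinearMap.compMultilinearMap_apply, LinearMap.comp_apply]
  show phiMap n r (PiTensorProduct.map _ (PiTensorProduct.tprod ℂ v)) = _
  rw [PiTensorProduct.map_tprod, phiMap_tprod]
  funext f
  show (∏ i, (permutationRep n g (v i)) (f i)) = funRep n r g (phiMap n r (PiTensorProduct.tprod ℂ v)) f
  rw [phiMap_tprod]
  show _ = (fun f' : Fin r → Fin n => ∏ i, v i (f' i)) ((g⁻¹ : Equiv.Perm (Fin n)) • f)
  refine Finset.prod_congr rfl fun i _ => ?_
  rfl

/-- Membership in invariants is transported by `coordEquiv`. -/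
lemma mem_invariants_iff (x : ⨂[ℂ]^r (Fin n → ℂ)) :
    x ∈ (tpowRep (permutationRep n) r).invariants ↔
      (coordEquiv n r x) ∈ (funRep n r).invariants := by
  simp only [Representation.mem_invariants]
  constructor
  · intro hx g
    have := congrArg (fun y => phiMap n r y) (hx g)
    have h2 := LinearMap.congr_fun (phiMap_comm n r g) x
    simp only [LinearMap.comp_apply] at h2
    show funRep n r g (phiMap n r x) = phiMap n r x
    rw [← h2]; exact this
  · intro hx g
    apply (coordEquiv n r).injective
    have h2 := LinearMap.congr_fun (phiMap_comm n r g) x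
    simp only [LinearMap.comp_apply] at h2
    show phiMap n r _ = phiMap n r x
    rw [h2]; exact hx g

instance kerDecidable (f : Fin r → Fin n) : DecidableRel ⇑(Setoid.ker f) :=
  fun a b => decidable_of_iff (f a = f b) Setoid.ker_def.symm

instance kerDecidableR (f : Fin r → Fin n) : DecidableRel (Setoid.ker f).r :=
  kerDecidable n r f

/-- The fiber partition of a function. -/
def fiberPartition (f : Fin r → Fin n) : Finpartition (Finset.univ : Finset (Fin r)) :=
  Finpartition.ofSetoid (Setoid.ker f)

lemma mem_part_fiberPartition (f : Fin r → Fin n) (a b : Fin r) :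
    b ∈ (fiberPartition n r f).part a ↔ f a = f b := by
  rw [fiberPartition, Finpartition.mem_part_ofSetoid_iff_rel]
  exact Setoid.ker_def

lemma parts_eq_image_part {α : Type} [DecidableEq α] [Fintype α]
    (P : Finpartition (Finset.univ : Finset α)) :
    P.parts = Finset.univ.image P.part := by
  ext t
  constructor
  · intro ht
    obtain ⟨a, ha⟩ := P.nonempty_of_mem_parts ht
    exact Finset.mem_image.2 ⟨a, Finset.mem_univ a, P.part_eq_of_mem ht ha⟩
  · rintro ht
    obtain ⟨a, -, rfl⟩ := Finset.mem_image.1 ht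
    exact P.part_mem.2 (Finset.mem_univ a)

lemma fiberPartition_card_le (hn : 1 ≤ n) (f : Fin r → Fin n) :
    (fiberPartition n r f).parts.card ≤ n := by
  classical
  have h0 : (0 : ℕ) < n := hn
  haveI : Nonempty (Fin n) := ⟨⟨0, h0⟩⟩
  have : ((fiberPartition n r f).parts).card ≤ (Finset.univ : Finset (Fin n)).card := by
    apply Finset.card_le_card_of_injOn
      (fun t => if h : t.Nonempty then f h.choose else Classical.arbitrary (Fin n))
    · intro t _; exact Finset.mem_univ _
    · intro t ht u hu htu
      have htne : t.Nonempty := (fiberPartition n r f).nonempty_of_mem_parts ht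
      have hune : u.Nonempty := (fiberPartition n r f).nonempty_of_mem_parts hu
      simp only [dif_pos htne, dif_pos hune] at htu
      have h1 : htne.choose ∈ (fiberPartition n r f).part hune.choose := by
        rw [mem_part_fiberPartition]; exact htu.symm
      have h2 : (fiberPartition n r f).part hune.choose = u :=
        (fiberPartition n r f).part_eq_of_mem hu hune.choose_spec
      have h3 : htne.choose ∈ u := h2 ▸ h1
      exact (fiberPartition n r f).eq_of_mem_parts ht hu htne.choose_spec h3
  simpa using this

lemma fiberPartition_eq_iff (f f' : Fin r → Fin n) :
    fiberPartition n r f = fiberPartition n r f' ↔ ∀ a b, f a = f b ↔ f' a = f' b := by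
  constructor
  · intro h a b
    rw [← mem_part_fiberPartition n r f a b, ← mem_part_fiberPartition n r f' a b, h]
  · intro h
    have hpart : ∀ a, (fiberPartition n r f).part a = (fiberPartition n r f').part a := by
      intro a
      ext b
      rw [mem_part_fiberPartition, mem_part_fiberPartition]
      exact h a b
    apply Finpartition.ext
    rw [parts_eq_image_part, parts_eq_image_part]
    exact Finset.image_congr fun a _ => hpart a

lemma ker_eq_of_smul (f' : Fin r → Fin n) (g : Equiv.Perm (Fin n)) (a b : Fin r) :
    (g • f') a = (g • f') b ↔ f' a = f' b := by
  show g (f' a) = g (f' b) ↔ _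
  exact g.injective.eq_iff

lemma exists_perm_of_ker_eq (f f' : Fin r → Fin n)
    (h : ∀ a b, f a = f b ↔ f' a = f' b) :
    ∃ g : Equiv.Perm (Fin n), g • f' = f := by
  classical
  let β : Set.range f' ≃ Set.range f :=
  { toFun := fun x => ⟨f x.2.choose, Set.mem_range_self _⟩
    invFun := fun y => ⟨f' y.2.choose, Set.mem_range_self _⟩
    left_inv := by
      rintro ⟨x, hx⟩
      apply Subtype.ext
      show f' (Set.mem_range_self (f := f) hx.choose).choose = x
      have h1 : f (Set.mem_range_self (f := f) hx.choose).choose = f hx.choose :=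
        (Set.mem_range_self (f := f) hx.choose).choose_spec
      have h2 : f' (Set.mem_range_self (f := f) hx.choose).choose = f' hx.choose :=
        (h _ _).1 h1
      rw [h2, hx.choose_spec]
    right_inv := by
      rintro ⟨y, hy⟩
      apply Subtype.ext
      show f (Set.mem_range_self (f := f') hy.choose).choose = y
      have h1 : f' (Set.mem_range_self (f := f') hy.choose).choose = f' hy.choose :=
        (Set.mem_range_self (f := f') hy.choose).choose_spec
      have h2 : f (Set.mem_range_self (f := f') hy.choose).choose = f hy.choose :=
        (h _ _).2 h1
      rw [h2, hy.choose_spec] }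
  have hcard : Fintype.card ↥((Set.range f')ᶜ) = Fintype.card ↥((Set.range f)ᶜ) := by
    rw [Fintype.card_compl_set, Fintype.card_compl_set, Fintype.card_congr β]
  let γ : ↥((Set.range f')ᶜ) ≃ ↥((Set.range f)ᶜ) := Fintype.equivOfCardEq hcard
  refine ⟨(Equiv.Set.sumCompl (Set.range f')).symm.trans
    ((β.sumCongr γ).trans (Equiv.Set.sumCompl (Set.range f))), funext fun a => ?_⟩
  show (Equiv.Set.sumCompl (Set.range f))
      ((β.sumCongr γ) ((Equiv.Set.sumCompl (Set.range f')).symm (f' a))) = f a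
  rw [Equiv.Set.sumCompl_symm_apply_of_mem (Set.mem_range_self a)]
  show (Equiv.Set.sumCompl (Set.range f)) (Sum.inl (β ⟨f' a, Set.mem_range_self a⟩)) = f a
  rw [Equiv.Set.sumCompl_apply_inl]
  show f (Set.mem_range_self (f := f') a).choose = f a
  exact (h _ _).2 (Set.mem_range_self (f := f') a).choose_spec

lemma exists_fn_of_partition (hn : 1 ≤ n)
    (P : Finpartition (Finset.univ : Finset (Fin r))) (hP : P.parts.card ≤ n) :
    ∃ f : Fin r → Fin n, fiberPartition n r f = P := by
  classical
  obtain ⟨emb⟩ : Nonempty (↥P.parts ↪ Fin n) := by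
    apply Function.Embedding.nonempty_of_card_le
    simpa [Fintype.card_coe] using hP
  set f : Fin r → Fin n := fun a => emb ⟨P.part a, P.part_mem.2 (Finset.mem_univ a)⟩ with hf
  refine ⟨f, ?_⟩
  have hff : ∀ a b : Fin r, f a = f b ↔ P.part a = P.part b := by
    intro a b
    rw [hf]
    simp only [EmbeddingLike.apply_eq_iff_eq, Subtype.mk.injEq]
  have hpart : ∀ a, (fiberPartition n r f).part a = P.part a := by
    intro a
    ext b
    rw [mem_part_fiberPartition, hff,
      P.mem_part_iff_part_eq_part (Finset.mem_univ b) (Finset.mem_univ a)]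
    exact eq_comm
  apply Finpartition.ext
  rw [parts_eq_image_part, parts_eq_image_part]
  exact Finset.image_congr fun a _ => hpart a

end Aux

/-- The dimension of the space of `S_n`-invariant vectors in the `r`-th
tensor power of the defining permutation representation `ℂⁿ` equals the number of partitions
of the set `{1, …, r}` into at most `n` nonempty blocks. -/
theorem finrank_invariants_tpow_permutationRep (n r : ℕ) (hn : 1 ≤ n) :
    Module.finrank ℂ ((tpowRep (permutationRep n) r).invariants) =
      Nat.card {P : Finpartition (Finset.univ : Finset (Fin r)) // P.parts.card ≤ n} := by
  classical
  -- Step 1: transport along `coordEquiv` to the function model.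
  have e1 : (tpowRep (permutationRep n) r).invariants ≃ₗ[ℂ] (funRep n r).invariants := by
    refine LinearEquiv.ofBijective
      (((coordEquiv n r).toLinearMap.comp
        ((tpowRep (permutationRep n) r).invariants.subtype)).codRestrict
        (funRep n r).invariants ?_) ⟨?_, ?_⟩
    · rintro ⟨x, hx⟩
      exact (mem_invariants_iff n r x).1 hx
    · rintro ⟨x, hx⟩ ⟨y, hy⟩ hxy
      have := congrArg Subtype.val hxy
      simp only [LinearMap.codRestrict_apply, LinearMap.comp_apply,
        Submodule.subtype_apply] at this
      exact Subtype.ext ((coordEquiv n r).injective this)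
    · rintro ⟨c, hc⟩
      refine ⟨⟨(coordEquiv n r).symm c, ?_⟩, ?_⟩
      · rw [mem_invariants_iff n r, LinearEquiv.apply_symm_apply]; exact hc
      · apply Subtype.ext
        simp only [LinearMap.codRestrict_apply, LinearMap.comp_apply,
          Submodule.subtype_apply, LinearEquiv.coe_coe, LinearEquiv.apply_symm_apply]
  -- Step 2: the invariants of `funRep` are functions on the orbit quotient.
  let Q := Quotient (MulAction.orbitRel (Equiv.Perm (Fin n)) (Fin r → Fin n))
  let L : (Q → ℂ) →ₗ[ℂ] ((Fin r → Fin n) → ℂ) :=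
    LinearMap.funLeft ℂ ℂ (Quotient.mk (MulAction.orbitRel (Equiv.Perm (Fin n)) (Fin r → Fin n)))
  have hLinj : Function.Injective L :=
    LinearMap.funLeft_injective_of_surjective ℂ ℂ _ Quotient.mk_surjective
  have hrange : LinearMap.range L = (funRep n r).invariants := by
    ext c
    constructor
    · rintro ⟨d, rfl⟩
      rw [Representation.mem_invariants]
      intro g
      funext f
      show d (Quotient.mk _ ((g⁻¹ : Equiv.Perm (Fin n)) • f)) = d (Quotient.mk _ f)
      congr 1
      exact Quotient.sound (MulAction.mem_orbit f g⁻¹)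
    · intro hc
      rw [Representation.mem_invariants] at hc
      refine ⟨Quotient.lift c ?_, ?_⟩
      · intro a b hab
        obtain ⟨g, hg⟩ := MulAction.orbitRel_apply.1 hab
        have := congrFun (hc g⁻¹) (g • b)
        show c a = c b
        rw [← hg]
        calc c (g • b) = c ((g⁻¹)⁻¹ • b) := by rw [inv_inv]
          _ = c b := by
              have := congrFun (hc g⁻¹) b
              simpa [funRep, LinearMap.funLeft] using this
      · funext f; rfl
  have e2 : (Q → ℂ) ≃ₗ[ℂ] (funRep n r).invariants :=
    (LinearEquiv.ofInjective L hLinj).trans (LinearEquiv.ofEq _ _ hrange)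
  -- Step 3: orbits biject with finpartitions with at most `n` parts.
  have hsound : ∀ a b : Fin r → Fin n,
      MulAction.orbitRel (Equiv.Perm (Fin n)) (Fin r → Fin n) a b →
      fiberPartition n r a = fiberPartition n r b := by
    intro a b hab
    obtain ⟨g, hg⟩ := MulAction.orbitRel_apply.1 hab
    rw [fiberPartition_eq_iff]
    intro i j
    rw [← hg]
    exact ker_eq_of_smul n r b g i j
  let Ψ : Q → {P : Finpartition (Finset.univ : Finset (Fin r)) // P.parts.card ≤ n} :=
    Quotient.lift (fun f => ⟨fiberPartition n r f, fiberPartition_card_le n r hn f⟩)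
      (fun a b hab => Subtype.ext (hsound a b hab))
  have hΨbij : Function.Bijective Ψ := by
    constructor
    · intro x y
      refine Quotient.inductionOn₂ x y ?_
      intro f f' hff
      have h1 : fiberPartition n r f = fiberPartition n r f' := congrArg Subtype.val hff
      rw [fiberPartition_eq_iff] at h1
      obtain ⟨g, hg⟩ := exists_perm_of_ker_eq n r f f' h1
      exact Quotient.sound (MulAction.orbitRel_apply.2 ⟨g, hg⟩)
    · rintro ⟨P, hP⟩
      obtain ⟨f, hf⟩ := exists_fn_of_partition n r hn P hP
      exact ⟨Quotient.mk _ f, Subtype.ext hf⟩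
  -- Conclude.
  haveI : Finite Q := Quotient.finite _
  haveI : Fintype Q := Fintype.ofFinite Q
  rw [e1.finrank_eq, ← e2.finrank_eq, Module.finrank_fintype_fun_eq_card,
    ← Nat.card_eq_fintype_card, Nat.card_congr (Equiv.ofBijective Ψ hΨbij)]

end TensorInv
end
end

section
/- Let n and r be natural numbers with n ≥ r ≥ 0, and let W = M_n(ℂ) be the adjoint representation of GL(n, ℂ), i.e. GL(n, ℂ) acting on the space of n×n complex matrices by conjugation, g·X = gXg⁻¹. Then the dimension of the space of GL(n, ℂ)-invariant vectors in W^{⊗r} equals r!. -/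
/-!
Formalization of statements from "Tensor invariants" (arXiv:1402.6111).
-/

open scoped TensorProduct

noncomputable section

namespace TensorInv

variable {k G V W : Type} [Field k] [Group G]
  [AddCommGroup V] [Module k V] [AddCommGroup W] [Module k W]

/-- The adjoint representation of `GL(n, ℂ)` on the space of `n × n` complex matrices,
`g • X = g * X * g⁻¹`. -/
def adjRep (n : ℕ) :
    Representation ℂ (GL (Fin n) ℂ) (Matrix (Fin n) (Fin n) ℂ) where
  toFun g := (LinearMap.mulLeft ℂ (g : Matrix (Fin n) (Fin n) ℂ)).comp
    (LinearMap.mulRight ℂ ((g⁻¹ : GL (Fin n) ℂ) : Matrix (Fin n) (Fin n) ℂ))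
  map_one' := by ext X; simp
  map_mul' g h := by ext X; simp [Matrix.mul_assoc]


lemma tpowRep_tprod_s15 {k G V : Type} [Field k] [Group G] [AddCommGroup V] [Module k V]
    (ρ : Representation k G V) (r : ℕ) (g : G) (m : Fin r → V) :
    tpowRep ρ r g (PiTensorProduct.tprod k m)
      = PiTensorProduct.tprod k (fun a => ρ g (m a)) := by
  simp [tpowRep, PiTensorProduct.map_tprod]

variable (n r : ℕ)
abbrev Mn := Matrix (Fin n) (Fin n) ℂ
abbrev Idx := Fin r → (Fin n × Fin n)
def E (c : Fin n × Fin n) : Mn n := Matrix.single c.1 c.2 1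

lemma adjRep_apply (g : GL (Fin n) ℂ) (M : Mn n) :
    adjRep n g M = (g : Mn n) * M * ((g⁻¹ : GL (Fin n) ℂ) : Mn n) := by
  simp [adjRep, LinearMap.mulLeft, LinearMap.mulRight, Matrix.mul_assoc]



abbrev P := Fin r → Fin n

def entry (c : Fin n × Fin n) : Mn n →ₗ[ℂ] ℂ where
  toFun M := M c.1 c.2
  map_add' M N := by simp [Matrix.add_apply]
  map_smul' s M := by simp [Matrix.smul_apply]

def tb (J : Idx n r) : ⨂[ℂ]^r (Mn n) := PiTensorProduct.tprod ℂ (fun a => E n (J a))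

def lf (K : Idx n r) : (⨂[ℂ]^r (Mn n)) →ₗ[ℂ] ℂ :=
  PiTensorProduct.lift
    ((MultilinearMap.mkPiAlgebra ℂ (Fin r) ℂ).compLinearMap (fun a => entry n (K a)))

lemma entry_E (c c' : Fin n × Fin n) : entry n c (E n c') = if c' = c then 1 else 0 := by
  show (Matrix.single c'.1 c'.2 (1:ℂ)) c.1 c.2 = _
  simp only [Matrix.single, Matrix.of_apply]
  by_cases h : c' = c
  · subst h; simp
  · rw [if_neg, if_neg h]
    rw [Prod.ext_iff] at h
    tauto

lemma lf_apply (K : Idx n r) (m : Fin r → Mn n) :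
    lf n r K (PiTensorProduct.tprod ℂ m) = ∏ a, entry n (K a) (m a) := by
  simp [lf, PiTensorProduct.lift.tprod]

lemma lf_tb (K J : Idx n r) : lf n r K (tb n r J) = if J = K then 1 else 0 := by
  rw [tb, lf_apply]
  by_cases h : J = K
  · subst h; simp [entry_E]
  · rw [if_neg h]
    obtain ⟨a, ha⟩ := Function.ne_iff.mp h
    exact Finset.prod_eq_zero (Finset.mem_univ a) (by rw [entry_E, if_neg ha])

lemma expand_tprod (m : Fin r → Mn n) :
    PiTensorProduct.tprod ℂ m
      = ∑ K : Idx n r, (∏ a, entry n (K a) (m a)) • tb n r K := by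
  have hm : ∀ a, m a = ∑ c : Fin n × Fin n, entry n c (m a) • E n c := by
    intro a
    conv_lhs => rw [Matrix.matrix_eq_sum_single (m a)]
    rw [← Fintype.sum_prod_type']
    refine Finset.sum_congr rfl fun c _ => ?_
    simp [E, entry, Matrix.smul_single]; rfl
  conv_lhs => rw [show m = fun a => ∑ c : Fin n × Fin n, entry n c (m a) • E n c from funext hm]
  rw [MultilinearMap.map_sum (PiTensorProduct.tprod ℂ)]
  refine Finset.sum_congr rfl fun K _ => ?_
  rw [MultilinearMap.map_smul_univ]
  rfl

lemma expand (x : ⨂[ℂ]^r (Mn n)) : x = ∑ K : Idx n r, lf n r K x • tb n r K := by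
  have h : (LinearMap.id : (⨂[ℂ]^r (Mn n)) →ₗ[ℂ] _)
      = ∑ K : Idx n r, (lf n r K).smulRight (tb n r K) := by
    apply PiTensorProduct.ext
    apply MultilinearMap.ext
    intro m
    simp only [LinearMap.compMultilinearMap_apply, LinearMap.id_apply, LinearMap.sum_apply,
      LinearMap.smulRight_apply]
    conv_lhs => rw [expand_tprod n r m]
    exact Finset.sum_congr rfl fun K _ => by rw [lf_apply]
  conv_lhs => rw [← LinearMap.id_apply (R := ℂ) x, h]
  simp

lemma ext_lf {x y : ⨂[ℂ]^r (Mn n)} (h : ∀ K, lf n r K x = lf n r K y) : x = y := by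
  rw [expand n r x, expand n r y]
  exact Finset.sum_congr rfl fun K _ => by rw [h K]


lemma mul_E_mul (A B : Mn n) (c : Fin n × Fin n) (p q : Fin n) :
    (A * E n c * B) p q = A p c.1 * B c.2 q := by
  rw [Matrix.mul_assoc, Matrix.mul_apply]
  rw [Finset.sum_eq_single c.1]
  · rw [E, Matrix.single_mul_apply_same, one_mul]
  · intro b _ hb
    rw [E, Matrix.single_mul_apply_of_ne _ _ _ _ _ hb, mul_zero]
  · simp

lemma lf_rep_tb (g : GL (Fin n) ℂ) (K J : Idx n r) :
    lf n r K (tpowRep (adjRep n) r g (tb n r J))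
      = ∏ a, ((g : Mn n) (K a).1 (J a).1 * ((g⁻¹ : GL (Fin n) ℂ) : Mn n) (J a).2 (K a).2) := by
  rw [tb, tpowRep_tprod_s15, lf_apply]
  refine Finset.prod_congr rfl fun a _ => ?_
  rw [adjRep_apply]
  show (_ * E n (J a) * _) (K a).1 (K a).2 = _
  rw [mul_E_mul]

lemma lf_rep (g : GL (Fin n) ℂ) (K : Idx n r) (x : ⨂[ℂ]^r (Mn n)) :
    lf n r K (tpowRep (adjRep n) r g x)
      = ∑ J : Idx n r,
          (∏ a, ((g : Mn n) (K a).1 (J a).1 * ((g⁻¹ : GL (Fin n) ℂ) : Mn n) (J a).2 (K a).2))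
            * lf n r J x := by
  conv_lhs => rw [expand n r x, map_sum, map_sum]
  refine Finset.sum_congr rfl fun J _ => ?_
  rw [map_smul, map_smul, lf_rep_tb]
  simp [mul_comm]

lemma mem_invariants_iff_s15 (x : ⨂[ℂ]^r (Mn n)) :
    x ∈ (tpowRep (adjRep n) r).invariants ↔
      ∀ (g : GL (Fin n) ℂ) (K : Idx n r),
        (∑ J : Idx n r,
          (∏ a, ((g : Mn n) (K a).1 (J a).1 * ((g⁻¹ : GL (Fin n) ℂ) : Mn n) (J a).2 (K a).2))
            * lf n r J x) = lf n r K x := by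
  rw [Representation.mem_invariants]
  constructor
  · intro h g K; rw [← lf_rep, h g]
  · intro h g
    apply ext_lf
    intro K
    rw [lf_rep, h g K]

def Gmat (A : Mn n) : Matrix (P n r) (P n r) ℂ := Matrix.of fun p q => ∏ a, A (p a) (q a)

def pair (p q : P n r) : Idx n r := fun a => (p a, q a)

def Cmat (x : ⨂[ℂ]^r (Mn n)) : Matrix (P n r) (P n r) ℂ :=
  Matrix.of fun p q => lf n r (pair n r p q) x

lemma pair_fst_snd (K : Idx n r) :
    pair n r (fun a => (K a).1) (fun a => (K a).2) = K := by
  funext a; rfl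

lemma sum_idx (f : Idx n r → ℂ) :
    ∑ J : Idx n r, f J = ∑ p : P n r, ∑ q : P n r, f (pair n r p q) := by
  calc ∑ J : Idx n r, f J
      = ∑ z : P n r × P n r, f (pair n r z.1 z.2) :=
        ((Fintype.sum_bijective (fun z : P n r × P n r => pair n r z.1 z.2)
    ⟨fun z w h => by
        have h1 : ∀ a, (z.1 a, z.2 a) = (w.1 a, w.2 a) := fun a => congrFun h a
        exact Prod.ext (funext fun a => (Prod.mk.injEq _ _ _ _).mp (h1 a) |>.1)
          (funext fun a => (Prod.mk.injEq _ _ _ _).mp (h1 a) |>.2),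
      fun J => ⟨(fun a => (J a).1, fun a => (J a).2), pair_fst_snd n r J⟩⟩
    _ _ (fun z => rfl))).symm
    _ = ∑ p : P n r, ∑ q : P n r, f (pair n r p q) := Fintype.sum_prod_type _

lemma Gmat_mul (A B : Mn n) : Gmat n r (A * B) = Gmat n r A * Gmat n r B := by
  ext p q
  rw [Matrix.mul_apply]
  simp only [Gmat, Matrix.of_apply, Matrix.mul_apply]
  rw [Finset.prod_univ_sum]
  exact Finset.sum_congr rfl fun m _ => by rw [Finset.prod_mul_distrib]

lemma Gmat_one : Gmat n r 1 = 1 := by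
  ext p q
  simp only [Gmat, Matrix.of_apply, Matrix.one_apply]
  by_cases h : p = q
  · subst h; simp
  · rw [if_neg h]
    obtain ⟨a, ha⟩ := Function.ne_iff.mp h
    exact Finset.prod_eq_zero (Finset.mem_univ a) (Matrix.one_apply_ne ha)

lemma Gmat_inv_mul (g : GL (Fin n) ℂ) :
    Gmat n r ((g : Mn n)) * Gmat n r ((g⁻¹ : GL (Fin n) ℂ) : Mn n) = 1 := by
  rw [← Gmat_mul]
  rw [show ((g : Mn n) * ((g⁻¹ : GL (Fin n) ℂ) : Mn n)) = 1 from by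
    rw [← Units.val_mul, mul_inv_cancel, Units.val_one]]
  exact Gmat_one n r

lemma invariant_commutes {x : ⨂[ℂ]^r (Mn n)}
    (hx : x ∈ (tpowRep (adjRep n) r).invariants) (g : GL (Fin n) ℂ) :
    Gmat n r (g : Mn n) * Cmat n r x = Cmat n r x * Gmat n r (g : Mn n) := by
  have key : Gmat n r (g : Mn n) * Cmat n r x * Gmat n r ((g⁻¹ : GL (Fin n) ℂ) : Mn n)
      = Cmat n r x := by
    ext p' q'
    have h := (mem_invariants_iff_s15 n r x).mp hx g (pair n r p' q')
    rw [sum_idx] at h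
    rw [Matrix.mul_apply]
    calc ∑ q, (Gmat n r (g : Mn n) * Cmat n r x) p' q
          * Gmat n r ((g⁻¹ : GL (Fin n) ℂ) : Mn n) q q'
        = ∑ q, ∑ p, Gmat n r (g : Mn n) p' p * Cmat n r x p q
            * Gmat n r ((g⁻¹ : GL (Fin n) ℂ) : Mn n) q q' := by
          refine Finset.sum_congr rfl fun q _ => ?_
          rw [Matrix.mul_apply, Finset.sum_mul]
      _ = lf n r (pair n r p' q') x := by
          rw [Finset.sum_comm, ← h]
          refine Finset.sum_congr rfl fun p _ => Finset.sum_congr rfl fun q _ => ?_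
          simp only [Gmat, Cmat, Matrix.of_apply, pair, Finset.prod_mul_distrib]
          ring
  calc Gmat n r (g : Mn n) * Cmat n r x
      = Gmat n r (g : Mn n) * Cmat n r x
          * (Gmat n r ((g⁻¹ : GL (Fin n) ℂ) : Mn n) * Gmat n r (g : Mn n)) := by
        rw [← Gmat_mul, show (((g⁻¹ : GL (Fin n) ℂ) : Mn n) * (g : Mn n)) = 1 from by
          rw [← Units.val_mul, inv_mul_cancel, Units.val_one], Gmat_one, Matrix.mul_one]
    _ = Cmat n r x * Gmat n r (g : Mn n) := by
        rw [← Matrix.mul_assoc, key]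

open Polynomial in
lemma det_add_smul_one (A : Mn n) (t : ℂ) :
    ((-A).charpoly).eval t = (A + t • 1).det := by
  rw [Matrix.charpoly, show eval t (Matrix.charmatrix (-A)).det
      = ((Matrix.charmatrix (-A)).map (evalRingHom t)).det from
    RingHom.map_det (evalRingHom t) (Matrix.charmatrix (-A))]
  congr 1
  ext i j
  by_cases h : i = j
  · subst h
    simp [Matrix.charmatrix_apply_eq, Matrix.add_apply, Matrix.smul_apply, add_comm]
  · simp [Matrix.charmatrix_apply, Matrix.diagonal_apply_ne _ h, Matrix.add_apply,
      Matrix.smul_apply, Matrix.one_apply_ne h]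

open Polynomial in
lemma commute_all (C : Matrix (P n r) (P n r) ℂ)
    (h : ∀ g : GL (Fin n) ℂ, Gmat n r (g : Mn n) * C = C * Gmat n r (g : Mn n))
    (A : Mn n) : Gmat n r A * C = C * Gmat n r A := by
  have hGL : ∀ M : Mn n, IsUnit M.det → Gmat n r M * C = C * Gmat n r M := by
    intro M hM
    obtain ⟨u, hu⟩ := (Matrix.isUnit_iff_isUnit_det M).mpr hM
    have := h u
    rwa [hu] at this
  ext p' q'
  -- polynomial in t whose value is the (p',q') entry of the commutator with Gmat (A + t•1)
  set Pp : P n r → P n r → Polynomial ℂ := fun p q =>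
    ∏ a, (Polynomial.C (A (p a) (q a)) + Polynomial.C ((1 : Mn n) (p a) (q a)) * X) with hPp
  have evalPp : ∀ (t : ℂ) p q, (Pp p q).eval t = Gmat n r (A + t • 1) p q := by
    intro t p q
    rw [hPp]
    simp only [eval_prod, eval_add, eval_mul, eval_C, eval_X, Gmat, Matrix.of_apply]
    exact Finset.prod_congr rfl fun a _ => by
      rw [Matrix.add_apply, Matrix.smul_apply, smul_eq_mul, mul_comm]
  set Q : Polynomial ℂ :=
    (∑ m, Pp p' m * Polynomial.C (C m q')) - ∑ m, Polynomial.C (C p' m) * Pp m q' with hQ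
  have evalQ : ∀ t : ℂ, Q.eval t
      = (Gmat n r (A + t • 1) * C) p' q' - (C * Gmat n r (A + t • 1)) p' q' := by
    intro t
    rw [hQ]
    simp only [eval_sub, eval_finset_sum, eval_mul, eval_C, Matrix.mul_apply, evalPp]
  have hQ0 : Q = 0 := by
    apply eq_zero_of_infinite_isRoot
    apply Set.Infinite.mono (s := {t : ℂ | ¬ ((-A).charpoly).IsRoot t})
    · intro t ht
      have hdet : IsUnit (A + t • 1).det := by
        rw [← det_add_smul_one]
        exact isUnit_iff_ne_zero.mpr ht
      have := hGL _ hdet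
      show Q.IsRoot t
      rw [IsRoot, evalQ, this, sub_self]
    · have hfin : {t : ℂ | ((-A).charpoly).IsRoot t}.Finite :=
        finite_setOf_isRoot ((-A).charpoly_monic.ne_zero)
      simpa [Set.compl_setOf] using hfin.infinite_compl
  have := evalQ 0
  rw [hQ0] at this
  simp only [eval_zero] at this
  have h2 : A + (0:ℂ) • 1 = A := by simp
  rw [h2] at this
  exact sub_eq_zero.mp this.symm

def cnt (i : Fin n) (p : P n r) : ℕ := (Finset.univ.filter fun a => p a = i).card

lemma prod_ite_two (i : Fin n) (p : P n r) :
    (∏ a, (if p a = i then (2:ℂ) else 1)) = 2 ^ cnt n r i p := by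
  rw [Finset.prod_ite, Finset.prod_const, Finset.prod_const, one_pow, mul_one, cnt]

lemma pow_two_inj {a b : ℕ} (h : (2:ℂ) ^ a = (2:ℂ) ^ b) : a = b := by
  have h2 : ((2 ^ a : ℕ) : ℂ) = ((2 ^ b : ℕ) : ℂ) := by push_cast; exact h
  exact Nat.pow_right_injective (le_refl 2) (Nat.cast_injective h2)

lemma counts_eq (C : Matrix (P n r) (P n r) ℂ)
    (hC : ∀ A : Mn n, Gmat n r A * C = C * Gmat n r A)
    (p q : P n r) (h : C p q ≠ 0) (i : Fin n) : cnt n r i p = cnt n r i q := by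
  have hd := hC (Matrix.diagonal (fun j => if j = i then (2:ℂ) else 1))
  have hd2 : Gmat n r (Matrix.diagonal (fun j => if j = i then (2:ℂ) else 1))
      = Matrix.diagonal (fun p : P n r => (2:ℂ) ^ cnt n r i p) := by
    ext p' q'
    by_cases hpq : p' = q'
    · subst hpq
      simp only [Gmat, Matrix.of_apply, Matrix.diagonal_apply_eq]
      rw [← prod_ite_two]
    · obtain ⟨a, ha⟩ := Function.ne_iff.mp hpq
      rw [Matrix.diagonal_apply_ne _ hpq]
      exact Finset.prod_eq_zero (Finset.mem_univ a) (Matrix.diagonal_apply_ne _ ha)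
  rw [hd2] at hd
  have hentry : (2:ℂ) ^ cnt n r i p * C p q = C p q * (2:ℂ) ^ cnt n r i q := by
    have h1 := congr_arg (fun M : Matrix (P n r) (P n r) ℂ => M p q) hd
    simpa [Matrix.diagonal_mul, Matrix.mul_diagonal] using h1
  apply pow_two_inj
  rw [mul_comm (C p q)] at hentry
  exact mul_right_cancel₀ h hentry

def emb (h : r ≤ n) : P n r := fun a => Fin.castLE h a

lemma emb_inj (h : r ≤ n) : Function.Injective (emb n r h) := by
  intro a b hab
  have hv : (a : ℕ) = (b : ℕ) := congrArg (fun x : Fin n => (x : ℕ)) hab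
  exact Fin.ext hv

lemma bijective_of_counts (h : r ≤ n) (μ : Fin r → Fin r)
    (hc : ∀ i, cnt n r i (fun a => emb n r h (μ a)) = cnt n r i (emb n r h)) :
    Function.Bijective μ := by
  apply Finite.injective_iff_bijective.mp
  intro a₁ a₂ h12
  have hone : cnt n r (emb n r h (μ a₁)) (emb n r h) = 1 := by
    rw [cnt, show Finset.univ.filter (fun a => emb n r h a = emb n r h (μ a₁)) = {μ a₁} from by
      ext a; simp [(emb_inj n r h).eq_iff]]
    exact Finset.card_singleton _
  have hcard : (Finset.univ.filter (fun a => μ a = μ a₁)).card = 1 := by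
    have h1 := hc (emb n r h (μ a₁))
    rw [hone, cnt] at h1
    rw [← h1]
    congr 1
    ext a
    simp [(emb_inj n r h).eq_iff]
  exact Finset.card_le_one.mp (le_of_eq hcard) a₁ (by simp) a₂ (by simp [h12])

def Amat (q : P n r) : Mn n :=
  Matrix.of fun i j => if hj : (j : ℕ) < r then (if i = q ⟨j, hj⟩ then (1:ℂ) else 0) else 0

lemma Gmat_Amat_comp (h : r ≤ n) (q p : P n r) (μ : Fin r → Fin r) :
    Gmat n r (Amat n r q) p (fun a => emb n r h (μ a))
      = if p = fun a => q (μ a) then 1 else 0 := by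
  have hfac : ∀ a : Fin r, (Amat n r q) (p a) (emb n r h (μ a))
      = if p a = q (μ a) then (1:ℂ) else 0 := by
    intro a
    have hlt : ((emb n r h (μ a) : Fin n) : ℕ) < r := (μ a).2
    simp only [Amat, Matrix.of_apply, dif_pos hlt]
    congr 1
  show (∏ a, (Amat n r q) (p a) (emb n r h (μ a))) = _
  rw [Finset.prod_congr rfl fun a _ => hfac a]
  by_cases hpq : p = fun a => q (μ a)
  · rw [if_pos hpq]
    exact Finset.prod_eq_one fun a _ => by rw [if_pos (congrFun hpq a)]
  · rw [if_neg hpq]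
    obtain ⟨a, ha⟩ := Function.ne_iff.mp hpq
    exact Finset.prod_eq_zero (Finset.mem_univ a) (if_neg ha)

lemma Gmat_Amat_emb (h : r ≤ n) (q m : P n r) :
    Gmat n r (Amat n r q) m (emb n r h) = if m = q then 1 else 0 := by
  have h1 := Gmat_Amat_comp n r h q m id
  simpa using h1

lemma Gmat_Amat_zero (h : r ≤ n) (q p m : P n r)
    (hm : ¬ ∀ a, (m a : ℕ) < r) : Gmat n r (Amat n r q) p m = 0 := by
  push_neg at hm
  obtain ⟨a, ha⟩ := hm
  exact Finset.prod_eq_zero (Finset.mem_univ a)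
    (by simp only [Amat, Matrix.of_apply, dif_neg (Nat.not_lt.mpr ha)])

lemma Cmat_formula (h : r ≤ n) (C : Matrix (P n r) (P n r) ℂ)
    (hC : ∀ A : Mn n, Gmat n r A * C = C * Gmat n r A) (p q : P n r) :
    C p q = ∑ σ : Equiv.Perm (Fin r),
      (if p = fun a => q (σ a) then 1 else 0) * C (fun a => emb n r h (σ a)) (emb n r h) := by
  have hco := congr_arg (fun M : Matrix (P n r) (P n r) ℂ => M p (emb n r h)) (hC (Amat n r q))
  simp only [Matrix.mul_apply] at hco
  -- RHS of hco is C p q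
  have hrhs : ∑ m, C p m * Gmat n r (Amat n r q) m (emb n r h) = C p q := by
    rw [Finset.sum_congr rfl fun m _ => by rw [Gmat_Amat_emb n r h]]
    simp
  rw [hrhs] at hco
  -- restrict LHS sum to functions of the form emb ∘ μ
  have e_inj : Function.Injective
      (fun μ : Fin r → Fin r => (fun a => emb n r h (μ a) : P n r)) := by
    intro μ ν hμν
    funext a
    exact emb_inj n r h (congrFun hμν a)
  have hvan : ∀ m ∈ Finset.univ, m ∉ Finset.image
      (fun μ : Fin r → Fin r => (fun a => emb n r h (μ a) : P n r)) Finset.univ →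
      Gmat n r (Amat n r q) p m * C m (emb n r h) = 0 := by
    intro m _ hmim
    have hm : ¬ ∀ a, (m a : ℕ) < r := by
      intro hall
      exact hmim (Finset.mem_image.mpr ⟨fun a => ⟨m a, hall a⟩, Finset.mem_univ _,
        by funext a; exact Fin.ext rfl⟩)
    rw [Gmat_Amat_zero n r h q p m hm, zero_mul]
  have hsub : ∑ m, Gmat n r (Amat n r q) p m * C m (emb n r h)
      = ∑ μ : Fin r → Fin r,
          Gmat n r (Amat n r q) p (fun a => emb n r h (μ a))
            * C (fun a => emb n r h (μ a)) (emb n r h) :=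
    ((Finset.sum_subset (Finset.subset_univ _) hvan).symm).trans
      (Finset.sum_image (fun μ _ ν _ hh => e_inj hh))
  rw [hsub] at hco
  -- kill non-bijective μ and reindex by permutations
  have hperm : ∑ μ : Fin r → Fin r,
      Gmat n r (Amat n r q) p (fun a => emb n r h (μ a))
        * C (fun a => emb n r h (μ a)) (emb n r h)
      = ∑ σ : Equiv.Perm (Fin r),
          (if p = fun a => q (σ a) then 1 else 0)
            * C (fun a => emb n r h (σ a)) (emb n r h) := by
    have hvan2 : ∀ μ ∈ Finset.univ, μ ∉ Finset.image
        (fun σ : Equiv.Perm (Fin r) => (σ : Fin r → Fin r)) Finset.univ →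
        Gmat n r (Amat n r q) p (fun a => emb n r h (μ a))
          * C (fun a => emb n r h (μ a)) (emb n r h) = 0 := by
      intro μ _ hμim
      have hnb : ¬ Function.Bijective μ := by
        intro hb
        exact hμim (Finset.mem_image.mpr ⟨Equiv.ofBijective μ hb, Finset.mem_univ _, rfl⟩)
      have hz : C (fun a => emb n r h (μ a)) (emb n r h) = 0 := by
        by_contra hne
        exact hnb (bijective_of_counts n r h μ (counts_eq n r C hC _ _ hne))
      rw [hz, mul_zero]
    refine (((Finset.sum_subset (Finset.subset_univ _) hvan2).symm).trans
      (Finset.sum_image (fun σ _ τ _ hh => Equiv.coe_fn_injective hh))).trans ?_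
    exact Finset.sum_congr rfl fun σ _ => by rw [Gmat_Amat_comp n r h]
  rw [hperm] at hco
  exact hco.symm

def T (σ : Equiv.Perm (Fin r)) : ⨂[ℂ]^r (Mn n) :=
  ∑ q : P n r, tb n r (fun a => (q (σ a), q a))

lemma lf_T (σ : Equiv.Perm (Fin r)) (p s : P n r) :
    lf n r (pair n r p s) (T n r σ) = if p = fun a => s (σ a) then 1 else 0 := by
  rw [T, map_sum]
  have hcond : ∀ q : P n r,
      ((fun a => (q (σ a), q a)) = pair n r p s) ↔ (q = s ∧ p = fun a => s (σ a)) := by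
    intro q
    constructor
    · intro hq
      have h1 : ∀ a, q (σ a) = p a := fun a => congrArg Prod.fst (congrFun hq a)
      have h2 : ∀ a, q a = s a := fun a => congrArg Prod.snd (congrFun hq a)
      have hqs : q = s := funext h2
      exact ⟨hqs, funext fun a => by rw [← h1 a, hqs]⟩
    · rintro ⟨rfl, rfl⟩
      rfl
  rw [Finset.sum_congr rfl fun q _ => by
    rw [lf_tb n r (pair n r p s), if_congr (hcond q) rfl rfl]]
  by_cases hps : p = fun a => s (σ a)
  · simp [hps]
  · simp [hps]

lemma crit_sum_eq (g : GL (Fin n) ℂ) (x : ⨂[ℂ]^r (Mn n)) (p' q' : P n r) :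
    (∑ J : Idx n r,
      (∏ a, ((g : Mn n) ((pair n r p' q') a).1 (J a).1
        * ((g⁻¹ : GL (Fin n) ℂ) : Mn n) (J a).2 ((pair n r p' q') a).2)) * lf n r J x)
      = (Gmat n r (g : Mn n) * Cmat n r x
          * Gmat n r ((g⁻¹ : GL (Fin n) ℂ) : Mn n)) p' q' := by
  rw [sum_idx]
  calc ∑ p : P n r, ∑ q : P n r,
        (∏ a, ((g : Mn n) ((pair n r p' q') a).1 ((pair n r p q) a).1
          * ((g⁻¹ : GL (Fin n) ℂ) : Mn n) ((pair n r p q) a).2 ((pair n r p' q') a).2))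
          * lf n r (pair n r p q) x
      = ∑ q, ∑ p, Gmat n r (g : Mn n) p' p * Cmat n r x p q
          * Gmat n r ((g⁻¹ : GL (Fin n) ℂ) : Mn n) q q' := by
        rw [Finset.sum_comm]
        refine Finset.sum_congr rfl fun q _ => Finset.sum_congr rfl fun p _ => ?_
        simp only [Gmat, Cmat, Matrix.of_apply, pair, Finset.prod_mul_distrib]
        ring
    _ = (Gmat n r (g : Mn n) * Cmat n r x
          * Gmat n r ((g⁻¹ : GL (Fin n) ℂ) : Mn n)) p' q' := by
        rw [Matrix.mul_apply]
        refine Finset.sum_congr rfl fun q _ => ?_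
        rw [Matrix.mul_apply, Finset.sum_mul]

lemma mem_invariants_iff_mat (x : ⨂[ℂ]^r (Mn n)) :
    x ∈ (tpowRep (adjRep n) r).invariants ↔
      ∀ g : GL (Fin n) ℂ,
        Gmat n r (g : Mn n) * Cmat n r x * Gmat n r ((g⁻¹ : GL (Fin n) ℂ) : Mn n)
          = Cmat n r x := by
  rw [mem_invariants_iff_s15]
  constructor
  · intro hx g
    ext p' q'
    rw [← crit_sum_eq n r g x p' q']
    exact hx g (pair n r p' q')
  · intro hx g K
    have hK : K = pair n r (fun a => (K a).1) (fun a => (K a).2) := (pair_fst_snd n r K).symm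
    rw [hK, crit_sum_eq n r g x, hx g]
    rfl

lemma Gmat_Pmat_comm (A : Mn n) (σ : Equiv.Perm (Fin r)) :
    Gmat n r A * (Matrix.of fun p s : P n r => if p = (fun a => s (σ a)) then (1:ℂ) else 0)
      = (Matrix.of fun p s : P n r => if p = (fun a => s (σ a)) then (1:ℂ) else 0)
          * Gmat n r A := by
  ext p q
  rw [Matrix.mul_apply, Matrix.mul_apply]
  have hL : ∑ m, Gmat n r A p m
      * (Matrix.of fun p s : P n r => if p = (fun a => s (σ a)) then (1:ℂ) else 0) m q
      = Gmat n r A p (fun a => q (σ a)) := by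
    rw [Finset.sum_eq_single (fun a => q (σ a))]
    · simp
    · intro m _ hm
      rw [Matrix.of_apply, if_neg hm, mul_zero]
    · simp
  have hR : ∑ m,
      (Matrix.of fun p s : P n r => if p = (fun a => s (σ a)) then (1:ℂ) else 0) p m
        * Gmat n r A m q = Gmat n r A (fun a => p (σ⁻¹ a)) q := by
    rw [Finset.sum_eq_single (fun a => p (σ⁻¹ a))]
    · rw [Matrix.of_apply, if_pos, one_mul]
      funext a
      show p a = p (σ⁻¹ (σ a))
      rw [← Equiv.Perm.mul_apply, inv_mul_cancel, Equiv.Perm.one_apply]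
    · intro m _ hm
      rw [Matrix.of_apply, if_neg, zero_mul]
      intro hpm
      apply hm
      funext b
      have := congrFun hpm (σ⁻¹ b)
      rw [← Equiv.Perm.mul_apply, mul_inv_cancel, Equiv.Perm.one_apply] at this
      exact this.symm
    · simp
  rw [hL, hR]
  show (∏ a, A (p a) (q (σ a))) = ∏ a, A (p (σ⁻¹ a)) (q a)
  rw [← Equiv.prod_comp σ (fun b => A (p (σ⁻¹ b)) (q b))]
  exact Finset.prod_congr rfl fun a _ => by
    show A (p a) (q (σ a)) = A (p (σ⁻¹ (σ a))) (q (σ a))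
    rw [← Equiv.Perm.mul_apply, inv_mul_cancel, Equiv.Perm.one_apply]

lemma Cmat_T (σ : Equiv.Perm (Fin r)) :
    Cmat n r (T n r σ)
      = Matrix.of fun p s : P n r => if p = (fun a => s (σ a)) then (1:ℂ) else 0 := by
  ext p s
  exact lf_T n r σ p s

lemma T_invariant (σ : Equiv.Perm (Fin r)) :
    T n r σ ∈ (tpowRep (adjRep n) r).invariants := by
  rw [mem_invariants_iff_mat, Cmat_T]
  intro g
  rw [Gmat_Pmat_comm, Matrix.mul_assoc, Gmat_inv_mul, Matrix.mul_one]

lemma T_indep : LinearIndependent ℂ (T n r) → True := fun _ => trivial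

lemma T_linearIndependent (hrn : r ≤ n) : LinearIndependent ℂ (T n r) := by
  rw [Fintype.linearIndependent_iff]
  intro c hc τ
  have h0 := congrArg
    (lf n r (pair n r (fun a => emb n r hrn (τ a)) (emb n r hrn))) hc
  rw [map_sum, map_zero] at h0
  rw [Finset.sum_congr rfl (fun σ _ => by
    rw [map_smul, lf_T n r σ, smul_eq_mul])] at h0
  rw [Finset.sum_eq_single τ] at h0
  · rw [if_pos rfl, mul_one] at h0
    exact h0
  · intro σ _ hστ
    rw [if_neg, mul_zero]
    intro hcond
    apply hστ
    apply Equiv.ext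
    intro a
    exact (emb_inj n r hrn (congrFun hcond a)).symm
  · intro hτ
    exact absurd (Finset.mem_univ τ) hτ

lemma invariants_eq_span (hrn : r ≤ n) :
    (tpowRep (adjRep n) r).invariants = Submodule.span ℂ (Set.range (T n r)) := by
  apply le_antisymm
  · intro x hx
    have hcomm : ∀ g : GL (Fin n) ℂ,
        Gmat n r (g : Mn n) * Cmat n r x = Cmat n r x * Gmat n r (g : Mn n) :=
      invariant_commutes n r hx
    have hC := commute_all n r (Cmat n r x) hcomm
    have hxeq : x = ∑ σ : Equiv.Perm (Fin r),
        Cmat n r x (fun a => emb n r hrn (σ a)) (emb n r hrn) • T n r σ := by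
      apply ext_lf
      intro K
      rw [map_sum]
      have hK : K = pair n r (fun a => (K a).1) (fun a => (K a).2) := (pair_fst_snd n r K).symm
      rw [hK]
      calc lf n r (pair n r (fun a => (K a).1) (fun a => (K a).2)) x
          = Cmat n r x (fun a => (K a).1) (fun a => (K a).2) := rfl
        _ = ∑ σ : Equiv.Perm (Fin r),
            (if (fun a => (K a).1) = fun a => (K (σ a)).2 then (1:ℂ) else 0)
              * Cmat n r x (fun a => emb n r hrn (σ a)) (emb n r hrn) :=
            Cmat_formula n r hrn (Cmat n r x) hC _ _
        _ = ∑ σ : Equiv.Perm (Fin r),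
            lf n r (pair n r (fun a => (K a).1) (fun a => (K a).2))
              (Cmat n r x (fun a => emb n r hrn (σ a)) (emb n r hrn) • T n r σ) := by
            refine Finset.sum_congr rfl fun σ _ => ?_
            rw [map_smul, smul_eq_mul, lf_T, mul_comm]
    rw [hxeq]
    exact Submodule.sum_mem _ fun σ _ =>
      Submodule.smul_mem _ _ (Submodule.subset_span ⟨σ, rfl⟩)
  · rw [Submodule.span_le]
    rintro y ⟨σ, rfl⟩
    exact T_invariant n r σ


/-- For `n ≥ r`, the dimension of the space of `GL(n, ℂ)`-invariant
vectors in the `r`-th tensor power of the adjoint representation `M_n(ℂ)` equals `r!`. -/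
theorem finrank_invariants_tpow_adjRep (n r : ℕ) (hrn : r ≤ n) :
    Module.finrank ℂ ((tpowRep (adjRep n) r).invariants) = Nat.factorial r := by
  rw [invariants_eq_span n r hrn, finrank_span_eq_card (T_linearIndependent n r hrn),
    Fintype.card_perm, Fintype.card_fin]

end TensorInv
end
end
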